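/- arXiv:1410.4324 — 7 statements merged into one kernel-verified Lean document; each statement's English description precedes it below -/
import Mathlib

section
/- Let X be a real Banach space with x₀ ∈ X such that ‖x₀‖ > 1, and let C = closure of the convex hull of B_X ∪ {x₀, −x₀}, where B_X is the closed unit ball. Then C is the closed unit ball of an equivalent norm on X, and x₀ is a denting point of C. -/
open Metric Set

/-- If `‖x₀‖ > 1` and `C = closure (convexHull (B_X ∪ {x₀, -x₀}))`, then `C`
is the closed unit ball of an equivalent norm on `X` (closed, bounded, convex, symmetric and
a neighborhood of `0`), and `x₀` is a denting point of `C`. -/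
theorem statement1 {X : Type*} [NormedAddCommGroup X] [NormedSpace ℝ X] [CompleteSpace X]
    (x₀ : X) (hx₀ : 1 < ‖x₀‖)
    (C : Set X) (hC : C = closure (convexHull ℝ (Metric.closedBall (0 : X) 1 ∪ {x₀, -x₀}))) :
    (IsClosed C ∧ Bornology.IsBounded C ∧ Convex ℝ C ∧ (∀ x ∈ C, -x ∈ C) ∧ 0 ∈ interior C) ∧
    (∀ ε > 0, ∃ (f : X →L[ℝ] ℝ) (α : ℝ), f ≠ 0 ∧ 0 < α ∧
      x₀ ∈ {x ∈ C | sSup (f '' C) - α < f x} ∧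
      Metric.diam {x ∈ C | sSup (f '' C) - α < f x} < ε) := by
  set M := ‖x₀‖ with hMdef
  have hM : (1:ℝ) < M := hx₀
  have hM0 : (0:ℝ) < M := by linarith
  have hx0ne : x₀ ≠ 0 := by
    intro h
    have h2 : M = 0 := by rw [hMdef, h, norm_zero]
    linarith
  obtain ⟨f, hf1, hfx⟩ := exists_dual_vector ℝ x₀ (norm_ne_zero_iff.mpr hx0ne)
  have hfx' : f x₀ = M := by exact_mod_cast hfx
  set S : Set X := Metric.closedBall (0:X) 1 ∪ {x₀, -x₀} with hSdef
  have hx₀S : x₀ ∈ S := Or.inr (Or.inl rfl)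
  have hx₀C : x₀ ∈ C := by
    rw [hC]; exact subset_closure (subset_convexHull ℝ _ hx₀S)
  -- Part 1
  have hclosed : IsClosed C := by rw [hC]; exact isClosed_closure
  have hSbdd : Bornology.IsBounded S := by
    apply Bornology.IsBounded.union (Metric.isBounded_closedBall)
    exact (Set.toFinite ({x₀, -x₀} : Set X)).isBounded
  have hbdd : Bornology.IsBounded C := by
    rw [hC]
    exact (isBounded_convexHull.2 hSbdd).closure
  have hconv : Convex ℝ C := by
    rw [hC]; exact (convex_convexHull ℝ S).closure
  have hnegS : -S = S := by
    ext x
    simp only [hSdef, Set.mem_neg, Set.mem_union, Metric.mem_closedBall, dist_zero_right,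
      Set.mem_insert_iff, Set.mem_singleton_iff, norm_neg]
    constructor
    · rintro (h | h | h)
      · exact Or.inl h
      · exact Or.inr (Or.inr (neg_eq_iff_eq_neg.mp h))
      · exact Or.inr (Or.inl (neg_inj.mp h))
    · rintro (h | h | h)
      · exact Or.inl h
      · exact Or.inr (Or.inr (by rw [h]))
      · exact Or.inr (Or.inl (by rw [h, neg_neg]))
  have hsymm : ∀ x ∈ C, -x ∈ C := by
    intro x hx
    rw [hC] at hx ⊢
    have : -x ∈ -closure (convexHull ℝ S) := Set.neg_mem_neg.2 hx
    rwa [neg_closure, ← convexHull_neg, hnegS] at this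
  have hzero : (0:X) ∈ interior C := by
    have hball : Metric.ball (0:X) 1 ⊆ C := by
      rw [hC]
      exact (Metric.ball_subset_closedBall.trans (Set.subset_union_left)).trans
        ((subset_convexHull ℝ S).trans subset_closure)
    exact interior_maximal hball Metric.isOpen_ball (Metric.mem_ball_self one_pos)
  refine ⟨⟨hclosed, hbdd, hconv, hsymm, hzero⟩, ?_⟩
  -- Part 2
  set K : ℝ := 2 * M / (M - 1) with hKdef
  have hK0 : 0 < K := by
    apply div_pos <;> linarith
  have hKM : K * (M - 1) = 2 * M := by
    rw [hKdef, div_mul_cancel₀ _ (by linarith : M - 1 ≠ 0)]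
  set T : Set X := {x | ‖x - x₀‖ + K * f x ≤ K * M} with hTdef
  have hTconv : Convex ℝ T := by
    intro x hx y hy a b ha hb hab
    simp only [hTdef, Set.mem_setOf_eq] at hx hy ⊢
    have hcomb : a • x + b • y - x₀ = a • (x - x₀) + b • (y - x₀) := by
      have : b = 1 - a := by linarith
      subst this; module
    have hnorm : ‖a • x + b • y - x₀‖ ≤ a * ‖x - x₀‖ + b * ‖y - x₀‖ := by
      rw [hcomb]
      calc ‖a • (x - x₀) + b • (y - x₀)‖ ≤ ‖a • (x - x₀)‖ + ‖b • (y - x₀)‖ := norm_add_le _ _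
        _ = a * ‖x - x₀‖ + b * ‖y - x₀‖ := by
          rw [norm_smul, norm_smul, Real.norm_of_nonneg ha, Real.norm_of_nonneg hb]
    have hf : f (a • x + b • y) = a * f x + b * f y := by
      simp [map_add, map_smul]
    have h1 : a * (‖x - x₀‖ + K * f x) ≤ a * (K * M) := mul_le_mul_of_nonneg_left hx ha
    have h2 : b * (‖y - x₀‖ + K * f y) ≤ b * (K * M) := mul_le_mul_of_nonneg_left hy hb
    nlinarith [hnorm, hf]
  have hTclosed : IsClosed T := by
    have : Continuous fun x : X => ‖x - x₀‖ + K * f x :=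
      ((continuous_id.sub continuous_const).norm).add (continuous_const.mul f.continuous)
    exact isClosed_le this continuous_const
  have hST : S ⊆ T := by
    rintro x (hx | rfl | hx)
    · simp only [Metric.mem_closedBall, dist_zero_right] at hx
      simp only [hTdef, Set.mem_setOf_eq]
      have h1 : ‖x - x₀‖ ≤ 1 + M := by
        calc ‖x - x₀‖ ≤ ‖x‖ + ‖x₀‖ := norm_sub_le _ _
          _ ≤ 1 + M := by rw [← hMdef]; linarith
      have h2 : f x ≤ 1 := by
        calc f x ≤ |f x| := le_abs_self _
          _ = ‖f x‖ := (Real.norm_eq_abs _).symm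
          _ ≤ ‖f‖ * ‖x‖ := f.le_opNorm x
          _ ≤ 1 := by rw [hf1]; linarith
      nlinarith
    · simp only [hTdef, Set.mem_setOf_eq, sub_self, norm_zero, zero_add, hfx']
      exact le_refl _
    · have hx' : x = -x₀ := hx
      subst hx'
      simp only [hTdef, Set.mem_setOf_eq, map_neg, hfx']
      have h1 : ‖-x₀ - x₀‖ ≤ 2 * M := by
        calc ‖-x₀ - x₀‖ ≤ ‖-x₀‖ + ‖x₀‖ := norm_sub_le _ _
          _ = 2 * M := by rw [norm_neg, ← hMdef]; ring
      nlinarith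
  have hCT : C ⊆ T := by
    rw [hC]
    exact closure_minimal (convexHull_min hST hTconv) hTclosed
  have hfle : ∀ x ∈ C, f x ≤ M := by
    intro x hx
    have := hCT hx
    simp only [hTdef, Set.mem_setOf_eq] at this
    nlinarith [norm_nonneg (x - x₀)]
  have hbddAbove : BddAbove (f '' C) := by
    refine ⟨M, ?_⟩
    rintro y ⟨x, hx, rfl⟩
    exact hfle x hx
  have hsSup : sSup (f '' C) = M := by
    apply le_antisymm
    · exact csSup_le ⟨f x₀, Set.mem_image_of_mem f hx₀C⟩ (by rintro y ⟨x, hx, rfl⟩; exact hfle x hx)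
    · rw [← hfx']
      exact le_csSup hbddAbove (Set.mem_image_of_mem f hx₀C)
  intro ε hε
  refine ⟨f, ε / (4 * K), ?_, by positivity, ?_, ?_⟩
  · intro h
    rw [h] at hfx'
    simp at hfx'
    linarith
  · refine ⟨hx₀C, ?_⟩
    rw [hsSup, hfx']
    have : 0 < ε / (4 * K) := by positivity
    linarith
  · have hdist : ∀ x ∈ {x ∈ C | sSup (f '' C) - ε / (4 * K) < f x}, ‖x - x₀‖ ≤ ε / 4 := by
      rintro x ⟨hxC, hxf⟩
      rw [hsSup] at hxf
      have h1 := hCT hxC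
      simp only [hTdef, Set.mem_setOf_eq] at h1
      have h2 : ‖x - x₀‖ ≤ K * (M - f x) := by nlinarith
      have h3 : M - f x < ε / (4 * K) := by linarith
      calc ‖x - x₀‖ ≤ K * (M - f x) := h2
        _ ≤ K * (ε / (4 * K)) := by nlinarith [norm_nonneg (x - x₀)]
        _ = ε / 4 := by field_simp
    have hdiam : Metric.diam {x ∈ C | sSup (f '' C) - ε / (4 * K) < f x} ≤ ε / 2 := by
      apply Metric.diam_le_of_forall_dist_le (by linarith)
      intro x hx y hy
      calc dist x y ≤ dist x x₀ + dist x₀ y := dist_triangle _ _ _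
        _ = ‖x - x₀‖ + ‖y - x₀‖ := by rw [dist_eq_norm, dist_comm x₀ y, dist_eq_norm]
        _ ≤ ε / 4 + ε / 4 := add_le_add (hdist x hx) (hdist y hy)
        _ = ε / 2 := by ring
    linarith
end

section
/- If a separation argument applies: let X be a Banach space, B a closed bounded convex set, x₀ ∉ B, and x* ∈ S_{X*} with x*(x₀) > M := sup x*(B). Then for 0 < α < (x*(x₀) − M)·ε / (2(β + ‖x₀‖)) with β = sup_{x∈B} ‖x‖, every pair of points y, z in conv(B ∪ {x₀}) with x*(y), x*(z) > x*(x₀) − α satisfies ‖y − z‖ < ε. -/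
open Metric Set

/-- quantitative separation estimate: any two points of `conv (B ∪ {x₀})` lying
in the slice `{x : x*(x) > x*(x₀) - α}` are at distance less than `ε`. -/
theorem statement2 {X : Type*} [NormedAddCommGroup X] [NormedSpace ℝ X] [CompleteSpace X]
    (B : Set X) (hBclosed : IsClosed B) (hBbdd : Bornology.IsBounded B) (hBconv : Convex ℝ B)
    (hBne : B.Nonempty) (x₀ : X) (hx₀ : x₀ ∉ B)
    (f : X →L[ℝ] ℝ) (hf : ‖f‖ = 1)
    (M : ℝ) (hM : M = sSup (f '' B)) (hsep : M < f x₀)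
    (β : ℝ) (hβ : β = sSup ((fun x => ‖x‖) '' B))
    (ε : ℝ) (hε : 0 < ε)
    (α : ℝ) (hα : 0 < α) (hα' : α < (f x₀ - M) * ε / (2 * (β + ‖x₀‖)))
    (y z : X) (hy : y ∈ convexHull ℝ (B ∪ {x₀})) (hz : z ∈ convexHull ℝ (B ∪ {x₀}))
    (hfy : f x₀ - α < f y) (hfz : f x₀ - α < f z) :
    ‖y - z‖ < ε := by
  obtain ⟨C, hC⟩ := hBbdd.exists_norm_le
  have hfbdd : BddAbove (f '' B) := by
    refine ⟨C, ?_⟩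
    rintro _ ⟨x, hx, rfl⟩
    calc f x ≤ |f x| := le_abs_self _
      _ = ‖f x‖ := rfl
      _ ≤ ‖f‖ * ‖x‖ := f.le_opNorm x
      _ ≤ C := by rw [hf, one_mul]; exact hC x hx
  have hβbdd : BddAbove ((fun x => ‖x‖) '' B) := by
    refine ⟨C, ?_⟩
    rintro _ ⟨x, hx, rfl⟩
    exact hC x hx
  have hfxM : 0 < f x₀ - M := sub_pos.2 hsep
  have hden : 0 < β + ‖x₀‖ := by
    by_contra h
    push_neg at h
    have h1 : (f x₀ - M) * ε / (2 * (β + ‖x₀‖)) ≤ 0 := by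
      rcases eq_or_lt_of_le h with h' | h'
      · rw [h']; simp
      · exact le_of_lt (div_neg_of_pos_of_neg (by positivity) (by linarith))
    linarith
  have hα2 : α * (2 * (β + ‖x₀‖)) < (f x₀ - M) * ε := by
    linarith [(lt_div_iff₀ (by positivity : (0:ℝ) < 2 * (β + ‖x₀‖))).1 hα']
  have key : ∀ w ∈ convexHull ℝ (B ∪ {x₀}), f x₀ - α < f w → ‖w - x₀‖ < ε / 2 := by
    intro w hw hfw
    rw [union_singleton, convexHull_insert hBne] at hw
    rw [mem_convexJoin] at hw
    obtain ⟨x, hx, b, hb, hwseg⟩ := hw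
    rw [mem_singleton_iff] at hx
    rw [hx] at hwseg
    rw [hBconv.convexHull_eq] at hb
    obtain ⟨a, c, ha, hc, hac, rfl⟩ := hwseg
    have ha' : a = 1 - c := by linarith
    subst ha'
    have hfb : f b ≤ M := hM ▸ le_csSup hfbdd ⟨b, hb, rfl⟩
    have hbβ : ‖b‖ ≤ β := hβ ▸ le_csSup hβbdd ⟨b, hb, rfl⟩
    have hfwval : f ((1 - c) • x₀ + c • b) = (1 - c) * f x₀ + c * f b := by
      simp [map_add, map_smul, smul_eq_mul]
    rw [hfwval] at hfw
    have hcα : c * (f x₀ - M) < α := by nlinarith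
    have heq : (1 - c) • x₀ + c • b - x₀ = c • (b - x₀) := by module
    rw [heq, norm_smul, Real.norm_eq_abs, abs_of_nonneg hc]
    have hnb : ‖b - x₀‖ ≤ β + ‖x₀‖ := le_trans (norm_sub_le _ _) (by linarith)
    have h1 : c * ‖b - x₀‖ ≤ c * (β + ‖x₀‖) := mul_le_mul_of_nonneg_left hnb hc
    have h2 : c * (β + ‖x₀‖) < ε / 2 := by nlinarith
    linarith
  have h1 := key y hy hfy
  have h2 := key z hz hfz
  calc ‖y - z‖ ≤ ‖y - x₀‖ + ‖x₀ - z‖ := norm_sub_le_norm_sub_add_norm_sub _ _ _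
    _ < ε := by rw [norm_sub_rev x₀ z]; linarith
end

section
/- Let X be a Banach space with the slice diameter two property (every slice of B_X has diameter 2), and suppose there exists a norm-one linear continuous projection π : X → Y onto a closed subspace Y such that ker(π) is finite-dimensional. Then Y has the slice diameter two property: every slice of B_Y has diameter 2. -/
open Metric Set

set_option maxHeartbeats 1000000 in
/-- Auxiliary key lemma: in a space with the slice-D2P, given a functional `f` and a continuous
linear map `v` into a (finite-dimensional in application, but here arbitrary) real inner product
space, bounded by `B` on the unit ball, one can find two points of a prescribed slice of `f`
which are almost at distance `2` and whose `v`-images are almost equal. -/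
theorem slice_key_aux {X K : Type*} [NormedAddCommGroup X] [NormedSpace ℝ X]
    [NormedAddCommGroup K] [InnerProductSpace ℝ K]
    (hX : ∀ f : X →L[ℝ] ℝ, f ≠ 0 → ∀ α > 0,
      Metric.diam {x ∈ closedBall (0 : X) 1 | ‖f‖ - α < f x} = 2)
    (f : X →L[ℝ] ℝ) (hfpos : 0 < ‖f‖) (v : X →L[ℝ] K) (B : ℝ) (hB : 1 ≤ B)
    (hv : ∀ x : X, ‖x‖ ≤ 1 → ‖v x‖ ≤ B)
    (α0 : ℝ) (hα0 : 0 < α0) (hα0f : α0 ≤ ‖f‖/2)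
    (ε' : ℝ) (hε' : 0 < ε') :
    ∃ x₁ x₂ : X, ‖x₁‖ ≤ 1 ∧ ‖x₂‖ ≤ 1 ∧ ‖f‖ - α0 < f x₁ ∧ ‖f‖ - α0 < f x₂ ∧
      ‖v x₁ - v x₂‖ < ε' ∧ 2 - ε' < ‖x₁ - x₂‖ := by
  have hfle : ∀ x : X, ‖x‖ ≤ 1 → f x ≤ ‖f‖ := by
    intro x hx
    have h1 := f.le_opNorm x
    have h2 : f x ≤ ‖f x‖ := (le_abs_self _).trans_eq (Real.norm_eq_abs _).symm
    have h3 : ‖f‖ * ‖x‖ ≤ ‖f‖ := mul_le_of_le_one_right (norm_nonneg f) hx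
    linarith only [h1, h2, h3]
  have hSX_ne : ∀ β : ℝ, 0 < β → ∃ x : X, ‖x‖ ≤ 1 ∧ ‖f‖ - β < f x := by
    intro β hβ
    rcases lt_or_ge (‖f‖ - β) 0 with h | h
    · exact ⟨0, by simp, by simpa using h⟩
    · obtain ⟨x, hx1, hx2⟩ := f.exists_lt_apply_of_lt_opNorm (show ‖f‖ - β < ‖f‖ by linarith)
      rcases le_or_gt 0 (f x) with hfx | hfx
      · exact ⟨x, hx1.le, by rwa [Real.norm_eq_abs, abs_of_nonneg hfx] at hx2⟩
      · refine ⟨-x, by simpa using hx1.le, ?_⟩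
        rw [map_neg]
        rwa [Real.norm_eq_abs, abs_of_neg hfx] at hx2
  set θ : ℝ := min ε' 1 with hθ_def
  have hθ_pos : 0 < θ := lt_min hε' one_pos
  have hθ_le1 : θ ≤ 1 := min_le_right _ _
  have hθ_leε : θ ≤ ε' := min_le_left _ _
  set τ : ℝ := (θ/4)^2 with hτ_def
  have hτ_pos : 0 < τ := by positivity
  have hτ_le : τ ≤ 1/16 := by
    have h1 : θ/4 ≤ 1/4 := by linarith only [hθ_le1]
    have h2 : (θ/4:ℝ)^2 ≤ (1/4:ℝ)^2 := pow_le_pow_left₀ (by positivity) h1 2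
    rw [hτ_def]
    norm_num at h2 ⊢
    linarith only [h2]
  set ν : ℝ := τ/8 with hν_def
  have hν_pos : 0 < ν := by positivity
  set c3 : ℝ := B^2 with hc3_def
  have hc3_1 : 1 ≤ c3 := by
    have h1 : (1:ℝ)*1 ≤ B*B := mul_le_mul hB hB one_pos.le (by linarith only [hB])
    rw [hc3_def, pow_two]
    linarith only [h1]
  set q : ℝ := τ/(32*c3) with hq_def
  have hq_pos : 0 < q := by positivity
  have hq_lt1 : q < 1 := by
    rw [hq_def, div_lt_one (by positivity)]
    linarith only [hτ_le, hc3_1]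
  set Nv : X → ℝ := fun x => ‖v x‖^2 with hNv_def
  set Sval : ℝ → Set ℝ := fun β => Nv '' {x : X | ‖x‖ ≤ 1 ∧ ‖f‖ - β < f x} with hSval_def
  set r : ℝ → ℝ := fun β => sSup (Sval β) with hr_def
  have hc3' : ∀ x : X, ‖x‖ ≤ 1 → Nv x ≤ c3 := by
    intro x hx
    have h1 := hv x hx
    have h0 : (0:ℝ) ≤ ‖v x‖ := norm_nonneg _
    simp only [hNv_def, hc3_def]
    exact pow_le_pow_left₀ h0 h1 2
  have hbdd : ∀ β : ℝ, BddAbove (Sval β) := by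
    intro β
    refine ⟨c3, fun z hz => ?_⟩
    obtain ⟨x, hx, rfl⟩ := hz
    exact hc3' x hx.1
  have hSval_ne : ∀ β : ℝ, 0 < β → (Sval β).Nonempty := by
    intro β hβ; obtain ⟨x, h1, h2⟩ := hSX_ne β hβ; exact ⟨Nv x, ⟨x, ⟨h1, h2⟩, rfl⟩⟩
  have hr_nonneg : ∀ β : ℝ, 0 < β → 0 ≤ r β := by
    intro β hβ
    obtain ⟨x, h1, h2⟩ := hSX_ne β hβ
    exact le_trans (sq_nonneg _) (le_csSup (hbdd β) ⟨x, ⟨h1, h2⟩, rfl⟩)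
  have hr_le : ∀ β : ℝ, 0 < β → r β ≤ c3 := fun β hβ =>
    csSup_le (hSval_ne β hβ) (fun z hz => by obtain ⟨x, hx, rfl⟩ := hz; exact hc3' x hx.1)
  obtain ⟨m, hm⟩ := exists_nat_gt (c3/ν)
  have hmν : c3 < m * ν := (div_lt_iff₀ hν_pos).mp hm
  have hβpos : ∀ jj : ℕ, 0 < α0 * q^jj := fun jj => by positivity
  have hβle : ∀ jj : ℕ, α0 * q^jj ≤ α0 := by
    intro jj
    calc α0 * q^jj ≤ α0 * 1 :=
          mul_le_mul_of_nonneg_left (pow_le_one₀ hq_pos.le hq_lt1.le) hα0.le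
      _ = α0 := mul_one _
  obtain ⟨j, hj⟩ : ∃ j : ℕ, r (α0 * q^j) ≤ r (α0 * q^(j+1)) + ν := by
    by_contra hcon
    push_neg at hcon
    have hkey : ∀ nn : ℕ, r (α0 * q^nn) ≤ r (α0 * q^0) - nn * ν := by
      intro nn
      induction nn with
      | zero => simp
      | succ k ih =>
        have h1 := hcon k
        push_cast
        linarith
    have h1 := hkey m
    have h2 := hr_nonneg _ (hβpos m)
    have h3 := hr_le _ (hβpos 0)
    linarith
  set β₂ : ℝ := α0 * q^j with hβ₂_def
  set β₁ : ℝ := α0 * q^(j+1) with hβ₁_def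
  have hβ₁_pos : 0 < β₁ := hβpos (j+1)
  have hβ₂_pos : 0 < β₂ := hβpos j
  have hβ₁₂ : β₁ = β₂ * q := by rw [hβ₁_def, hβ₂_def, pow_succ, mul_assoc]
  have hβ₂α : β₂ ≤ α0 := hβle j
  have hβ₁α : β₁ ≤ α0 := hβle (j+1)
  obtain ⟨z, hz_mem, hz_gt⟩ := exists_lt_of_lt_csSup (hSval_ne β₁ hβ₁_pos)
    (show r β₁ - ν < r β₁ by linarith)
  obtain ⟨xs, hxs_mem, hz_eq⟩ := hz_mem
  set u := v xs with hu_def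
  have hu_norm : ‖u‖ ≤ B := hv xs hxs_mem.1
  have hNu_gt : r β₁ - ν < ‖u‖^2 := by
    rw [hu_def, show ‖v xs‖^2 = Nv xs from rfl, hz_eq]; exact hz_gt
  have hNu_nonneg : (0:ℝ) ≤ ‖u‖^2 := sq_nonneg _
  set t : ℝ := 16*β₁/τ with ht_def
  have ht_pos : 0 < t := by positivity
  have hτt : τ * t = 16*β₁ := by rw [ht_def]; field_simp
  set Λ : X →L[ℝ] ℝ := (innerSL ℝ u).comp v with hΛ_def
  have hΛ_apply : ∀ x : X, Λ x = inner ℝ u (v x) := fun x => rfl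
  have hΛ_bound : ∀ x : X, ‖x‖ ≤ 1 → |Λ x| ≤ c3 := by
    intro x hx
    rw [hΛ_apply]
    calc |inner ℝ u (v x)| ≤ ‖u‖ * ‖v x‖ := abs_real_inner_le_norm _ _
      _ ≤ c3 := by
        have h1 := hv x hx
        rw [hc3_def, pow_two]
        exact mul_le_mul hu_norm h1 (norm_nonneg _) (by linarith only [hB])
  set ft : X →L[ℝ] ℝ := f + t • Λ with hft_def
  have hft_apply : ∀ x : X, ft x = f x + t * Λ x := fun x => by
    simp [hft_def, ContinuousLinearMap.add_apply, ContinuousLinearMap.smul_apply, smul_eq_mul]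
  have hft_lower : ‖f‖ - β₁ + t*‖u‖^2 < ‖ft‖ := by
    have h1 : ft xs = f xs + t * ‖u‖^2 := by
      rw [hft_apply, hΛ_apply, ← hu_def, real_inner_self_eq_norm_sq]
    have h3 : ft xs ≤ ‖ft xs‖ := (le_abs_self _).trans_eq (Real.norm_eq_abs _).symm
    have h2 : ft xs ≤ ‖ft‖ := by
      have h4 := ft.le_opNorm xs
      have h5 : ‖ft‖ * ‖xs‖ ≤ ‖ft‖ := mul_le_of_le_one_right (norm_nonneg ft) hxs_mem.1
      linarith only [h3, h4, h5]
    have h4 : ‖f‖ - β₁ < f xs := hxs_mem.2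
    have h2' : f xs + t * ‖u‖^2 ≤ ‖ft‖ := h1 ▸ h2
    linarith only [h2', h4]
  have hft_pos : 0 < ‖ft‖ := by
    linarith only [mul_nonneg ht_pos.le hNu_nonneg, hft_lower, hβ₁α, hα0f, hfpos]
  have hft_ne : ft ≠ 0 := by
    intro h0
    rw [h0, norm_zero] at hft_pos
    exact lt_irrefl _ hft_pos
  have hdiam := hX ft hft_ne β₁ hβ₁_pos
  obtain ⟨x₁, hx₁T, x₂, hx₂T, hdist⟩ :
      ∃ x₁ ∈ {x ∈ closedBall (0:X) 1 | ‖ft‖ - β₁ < ft x},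
        ∃ x₂ ∈ {x ∈ closedBall (0:X) 1 | ‖ft‖ - β₁ < ft x}, 2 - θ/2 < dist x₁ x₂ := by
    by_contra hcon
    push_neg at hcon
    have hle : diam {x ∈ closedBall (0:X) 1 | ‖ft‖ - β₁ < ft x} ≤ 2 - θ/2 :=
      diam_le_of_forall_dist_le (by linarith) (fun a ha b hb => hcon a ha b hb)
    rw [hdiam] at hle
    linarith
  have hmain : ∀ x : X, x ∈ {x ∈ closedBall (0:X) 1 | ‖ft‖ - β₁ < ft x} →
      ‖x‖ ≤ 1 ∧ ‖f‖ - β₂ < f x ∧ ‖v x - u‖ < θ/4 := by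
    intro x hxT
    obtain ⟨hx_ball, hx_slice⟩ := hxT
    have hx1 : ‖x‖ ≤ 1 := by rwa [mem_closedBall, dist_zero_right] at hx_ball
    rw [hft_apply] at hx_slice
    have h5 : ‖f‖ - β₁ + t*‖u‖^2 - β₁ < f x + t * Λ x := by
      linarith only [hft_lower, hx_slice]
    have hΛx := hΛ_bound x hx1
    have hfxle := hfle x hx1
    have h6 : t * Λ x ≤ t * c3 :=
      mul_le_mul_of_nonneg_left ((le_abs_self _).trans hΛx) ht_pos.le
    have h7 : β₁ + β₁ + t*c3 ≤ β₂ := by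
      have h9 : β₂ * τ = β₁ * (32*c3) := by
        rw [hβ₁₂, hq_def]; field_simp
      have h10 : t*c3*τ = 16*(β₁*c3) := by
        calc t*c3*τ = (τ*t)*c3 := by ring
          _ = 16*(β₁*c3) := by rw [hτt]; ring
      have hτ8c3 : τ ≤ 8*c3 := by linarith only [hτ_le, hc3_1]
      have h11 : β₁*τ ≤ β₁*(8*c3) := mul_le_mul_of_nonneg_left hτ8c3 hβ₁_pos.le
      have h8 : (β₁ + β₁ + t*c3) * τ ≤ β₂ * τ := by
        rw [h9]
        have hexp : (β₁ + β₁ + t*c3) * τ = β₁*τ + β₁*τ + t*c3*τ := by ring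
        rw [hexp, h10]
        have hgoal : β₁ * (32*c3) = 16*(β₁*c3) + 2*(β₁*(8*c3)) := by ring
        rw [hgoal]
        linarith only [h11]
      exact le_of_mul_le_mul_right h8 hτ_pos
    have hland : ‖f‖ - β₂ < f x := by
      linarith only [h5, h6, h7, mul_nonneg ht_pos.le hNu_nonneg]
    have hpin : ‖u‖^2 - τ/8 < Λ x := by
      have h11 : t*‖u‖^2 - (β₁ + β₁) < t * Λ x := by linarith only [h5, hfxle]
      have h12 : β₁ + β₁ = t * (τ/8) := by
        rw [ht_def]; field_simp; ring
      rw [h12] at h11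
      have h13 : t * (‖u‖^2 - τ/8) < t * Λ x := by rw [mul_sub]; linarith only [h11]
      exact lt_of_mul_lt_mul_left h13 ht_pos.le
    have hNvx : ‖v x‖^2 ≤ r β₂ := le_csSup (hbdd β₂) ⟨x, ⟨hx1, hland⟩, rfl⟩
    have hrr : r β₂ ≤ ‖u‖^2 + 2*ν := by
      have h17 := hj
      linarith only [h17, hNu_gt]
    have hsq : ‖v x - u‖^2 < τ := by
      have h9 := norm_sub_sq_real (v x) u
      have h10 : (inner ℝ (v x) u : ℝ) = Λ x := by rw [hΛ_apply, real_inner_comm]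
      rw [h10] at h9
      rw [h9]
      have hν8 : ν = τ/8 := hν_def
      linarith only [hNvx, hrr, hpin, hτ_pos, hν8]
    refine ⟨hx1, hland, ?_⟩
    have h14 : ‖v x - u‖^2 < (θ/4)^2 := by rwa [← hτ_def]
    exact lt_of_pow_lt_pow_left₀ 2 (by positivity) h14
  obtain ⟨h1x₁, h2x₁, h3x₁⟩ := hmain x₁ hx₁T
  obtain ⟨h1x₂, h2x₂, h3x₂⟩ := hmain x₂ hx₂T
  have hvdiff : ‖v x₁ - v x₂‖ < ε' := by
    have h4 : ‖v x₁ - v x₂‖ ≤ ‖v x₁ - u‖ + ‖u - v x₂‖ :=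
      norm_sub_le_norm_sub_add_norm_sub _ _ _
    have h5 : ‖u - v x₂‖ = ‖v x₂ - u‖ := norm_sub_rev _ _
    rw [h5] at h4
    linarith only [h4, h3x₁, h3x₂, hθ_leε, hθ_pos]
  have hβ₂α0 : β₂ ≤ α0 := hβ₂α
  refine ⟨x₁, x₂, h1x₁, h1x₂, by linarith only [h2x₁, hβ₂α0], by linarith only [h2x₂, hβ₂α0],
    hvdiff, ?_⟩
  rw [dist_eq_norm] at hdist
  linarith only [hdist, hθ_leε, hθ_pos]

set_option maxHeartbeats 1000000 in
/-- the slice diameter two property passes from `X` to a subspace `Y` which is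
the range of a norm-one projection with finite-dimensional kernel. -/
theorem statement3 {X : Type*} [NormedAddCommGroup X] [NormedSpace ℝ X] [CompleteSpace X]
    (hX : ∀ f : X →L[ℝ] ℝ, f ≠ 0 → ∀ α > 0,
      Metric.diam {x ∈ closedBall (0 : X) 1 | ‖f‖ - α < f x} = 2)
    (Y : Subspace ℝ X) (hYclosed : IsClosed (Y : Set X))
    (π : X →L[ℝ] Y) (hproj : ∀ y : Y, π (y : X) = y) (hnorm : ‖π‖ = 1)
    (hker : FiniteDimensional ℝ (LinearMap.ker (π : X →ₗ[ℝ] Y))) :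
    ∀ g : Y →L[ℝ] ℝ, g ≠ 0 → ∀ α > 0,
      Metric.diam {y ∈ closedBall (0 : Y) 1 | ‖g‖ - α < g y} = 2 := by
  intro g hg α hα
  haveI := hker
  set SY : Set Y := {y ∈ closedBall (0 : Y) 1 | ‖g‖ - α < g y} with hSY_def
  set f : X →L[ℝ] ℝ := g.comp π with hf_def
  have hgpos : (0:ℝ) < ‖g‖ :=
    (norm_nonneg g).lt_of_ne (fun h => hg (g.opNorm_zero_iff.mp h.symm))
  have hfg : ‖f‖ = ‖g‖ := by
    refine le_antisymm ?_ ?_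
    · calc ‖f‖ ≤ ‖g‖ * ‖π‖ := g.opNorm_comp_le π
        _ = ‖g‖ := by rw [hnorm, mul_one]
    · refine g.opNorm_le_bound (norm_nonneg f) fun y => ?_
      have h1 : f (y : X) = g y := by simp [hf_def, hproj]
      calc ‖g y‖ = ‖f (y:X)‖ := by rw [h1]
        _ ≤ ‖f‖ * ‖(y:X)‖ := f.le_opNorm _
        _ = ‖f‖ * ‖y‖ := rfl
  have hfpos : 0 < ‖f‖ := by rw [hfg]; exact hgpos
  set ρ : X →L[ℝ] (LinearMap.ker (π : X →ₗ[ℝ] Y)) :=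
    (ContinuousLinearMap.id ℝ X - Y.subtypeL.comp π).codRestrict (LinearMap.ker (π : X →ₗ[ℝ] Y))
      (fun x => by
        simp only [LinearMap.mem_ker, ContinuousLinearMap.coe_coe,
          ContinuousLinearMap.sub_apply, ContinuousLinearMap.id_apply,
          ContinuousLinearMap.comp_apply, Submodule.subtypeL_apply, map_sub, hproj]
        exact sub_self _) with hρ_def
  have hρ_coe : ∀ x : X, ((ρ x : X)) = x - (π x : X) := fun x => rfl
  let e : (LinearMap.ker (π : X →ₗ[ℝ] Y)) ≃L[ℝ] EuclideanSpace ℝ (Fin (Module.finrank ℝ (LinearMap.ker (π : X →ₗ[ℝ] Y)))) :=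
    toEuclidean
  obtain ⟨C, hC1, hCe, hCs⟩ : ∃ C : ℝ, 1 ≤ C ∧ (∀ k, ‖e k‖ ≤ C * ‖k‖) ∧
      (∀ w, ‖e.symm w‖ ≤ C * ‖w‖) := by
    refine ⟨max 1 (max ‖e.toContinuousLinearMap‖ ‖e.symm.toContinuousLinearMap‖),
      le_max_left _ _, fun k => ?_, fun w => ?_⟩
    · exact (e.toContinuousLinearMap.le_opNorm k).trans
        (mul_le_mul_of_nonneg_right ((le_max_left _ _).trans (le_max_right _ _)) (norm_nonneg _))
    · exact (e.symm.toContinuousLinearMap.le_opNorm w).trans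
        (mul_le_mul_of_nonneg_right ((le_max_right _ _).trans (le_max_right _ _)) (norm_nonneg _))
  have hCpos : (0:ℝ) < C := lt_of_lt_of_le one_pos hC1
  set v : X →L[ℝ] EuclideanSpace ℝ (Fin (Module.finrank ℝ (LinearMap.ker (π : X →ₗ[ℝ] Y)))) :=
    e.toContinuousLinearMap.comp ρ with hv_def
  have hv_apply : ∀ x : X, v x = e (ρ x) := fun x => rfl
  have hρ_bound : ∀ x : X, ‖x‖ ≤ 1 → ‖ρ x‖ ≤ 2 := by
    intro x hx
    have h1 : ‖ρ x‖ = ‖(ρ x : X)‖ := rfl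
    rw [h1, hρ_coe]
    have h3 : ‖π x‖ ≤ ‖π‖ * ‖x‖ := π.le_opNorm x
    rw [hnorm, one_mul] at h3
    have h2 : ‖(π x : X)‖ = ‖π x‖ := rfl
    calc ‖x - (π x : X)‖ ≤ ‖x‖ + ‖(π x : X)‖ := norm_sub_le _ _
      _ ≤ 1 + 1 := by rw [h2]; exact add_le_add hx (h3.trans hx)
      _ = 2 := by norm_num
  have hv_bound : ∀ x : X, ‖x‖ ≤ 1 → ‖v x‖ ≤ 2*C := by
    intro x hx
    rw [hv_apply]
    refine (hCe _).trans ?_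
    have h1 : C * ‖ρ x‖ ≤ C * 2 := mul_le_mul_of_nonneg_left (hρ_bound x hx) hCpos.le
    linarith only [h1]
  have hB1 : (1:ℝ) ≤ 2*C := by linarith
  have key : ∀ ε : ℝ, 0 < ε → ∃ y₁ ∈ SY, ∃ y₂ ∈ SY, 2 - ε < dist y₁ y₂ := by
    intro ε hε
    set α0 : ℝ := min α (‖f‖/2) with hα0_def
    have hα0_pos : 0 < α0 := lt_min hα (by positivity)
    set ε' : ℝ := min ε 1 / (2*C) with hε'_def
    have hε'_pos : 0 < ε' := by positivity
    obtain ⟨x₁, x₂, h1x₁, h1x₂, h2x₁, h2x₂, hvd, hxd⟩ :=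
      slice_key_aux hX f hfpos v (2*C) hB1 hv_bound α0 hα0_pos (min_le_right _ _) ε' hε'_pos
    have hmemY : ∀ x : X, ‖x‖ ≤ 1 → ‖f‖ - α0 < f x → π x ∈ SY := by
      intro x hx hfx
      have h1 : ‖π x‖ ≤ ‖π‖ * ‖x‖ := π.le_opNorm x
      rw [hnorm, one_mul] at h1
      refine ⟨by rw [mem_closedBall, dist_zero_right]; exact h1.trans hx, ?_⟩
      have h2 : g (π x) = f x := rfl
      have h3 : α0 ≤ α := min_le_left _ _
      rw [h2, ← hfg]
      linarith
    have hkdiff : ‖(ρ x₁ : X) - (ρ x₂ : X)‖ < min ε 1 / 2 := by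
      have h2 : ρ x₁ - ρ x₂ = e.symm (v x₁ - v x₂) := by
        rw [hv_apply, hv_apply, map_sub, e.symm_apply_apply, e.symm_apply_apply]
      calc ‖(ρ x₁ : X) - (ρ x₂ : X)‖ = ‖ρ x₁ - ρ x₂‖ := rfl
        _ = ‖e.symm (v x₁ - v x₂)‖ := by rw [h2]
        _ ≤ C * ‖v x₁ - v x₂‖ := hCs _
        _ < C * ε' := mul_lt_mul_of_pos_left hvd hCpos
        _ = min ε 1 / 2 := by rw [hε'_def]; field_simp
    refine ⟨π x₁, hmemY x₁ h1x₁ h2x₁, π x₂, hmemY x₂ h1x₂ h2x₂, ?_⟩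
    have hπ₁ : (π x₁ : X) = x₁ - (ρ x₁ : X) := by rw [hρ_coe]; abel
    have hπ₂ : (π x₂ : X) = x₂ - (ρ x₂ : X) := by rw [hρ_coe]; abel
    have hdY : dist (π x₁) (π x₂) = ‖(π x₁ : X) - (π x₂ : X)‖ := by
      rw [Subtype.dist_eq, dist_eq_norm]
    rw [hdY, hπ₁, hπ₂]
    have h15 : x₁ - (ρ x₁ : X) - (x₂ - (ρ x₂ : X)) =
        (x₁ - x₂) - ((ρ x₁ : X) - (ρ x₂ : X)) := by abel
    rw [h15]
    have h16 : ‖x₁ - x₂‖ - ‖(ρ x₁ : X) - (ρ x₂ : X)‖ ≤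
        ‖(x₁ - x₂) - ((ρ x₁ : X) - (ρ x₂ : X))‖ := norm_sub_norm_le _ _
    have h17 : ε' ≤ min ε 1 / 2 := by
      rw [hε'_def, div_le_div_iff₀ (by positivity) (by norm_num)]
      exact mul_le_mul_of_nonneg_left (by linarith only [hC1] : (2:ℝ) ≤ 2*C)
        (lt_min hε one_pos).le
    have h18 : min ε 1 ≤ ε := min_le_left _ _
    linarith only [hxd, hkdiff, h16, h17, h18]
  refine le_antisymm ?_ ?_
  · have h1 : SY ⊆ closedBall (0:Y) 1 := fun y hy => hy.1
    calc diam SY ≤ diam (closedBall (0:Y) 1) := diam_mono h1 isBounded_closedBall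
      _ ≤ 2*1 := diam_closedBall (by norm_num)
      _ = 2 := by norm_num
  · refine le_of_forall_pos_le_add (fun ε hε => ?_)
    obtain ⟨y₁, hy₁, y₂, hy₂, hd⟩ := key ε hε
    have hb : Bornology.IsBounded SY := isBounded_closedBall.subset (fun y hy => hy.1)
    have hdd := dist_le_diam_of_mem hb hy₁ hy₂
    linarith
end

section
/- Let X be a Banach space with the diameter two property (every nonempty relatively weakly open subset of B_X has diameter 2), and let Y be a closed subspace such that the quotient X/Y is finite-dimensional. Then Y has the diameter two property: every nonempty relatively weakly open subset of B_Y has diameter 2. -/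
open Metric Set

/-- Every weakly open set containing a point contains a basic weak neighborhood given
by finitely many functionals. -/
theorem weak_nhds_basic_aux {E : Type*} [NormedAddCommGroup E] [NormedSpace ℝ E]
    {V : Set E} (hV : @IsOpen (WeakSpace ℝ E) _ V) {v : E} (hv : v ∈ V) :
    ∃ (s : Finset (E →L[ℝ] ℝ)) (ε : ℝ), 0 < ε ∧
      {y : E | ∀ f ∈ s, |f y - f v| < ε} ⊆ V := by
  obtain ⟨t, ht, htV⟩ := isOpen_induced_iff.mp hV
  have hvt : (fun (f : E →L[ℝ] ℝ) => f v) ∈ t := by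
    rw [← htV] at hv; exact hv
  obtain ⟨I, u, hu, hsub⟩ := isOpen_pi_iff.mp ht _ hvt
  have hball : ∀ f ∈ I, ∃ ε > 0, ball (f v) ε ⊆ u f := by
    intro f hf
    exact Metric.isOpen_iff.mp (hu f hf).1 _ (hu f hf).2
  choose! εf hεf hballf using hball
  by_cases hI : I.Nonempty
  · obtain ⟨f₀, hf₀, hmin⟩ := I.exists_min_image εf hI
    refine ⟨I, εf f₀, hεf f₀ hf₀, fun y hy => ?_⟩
    rw [← htV]
    refine hsub ?_
    intro f hf
    refine hballf f hf ?_
    show dist (f y) (f v) < εf f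
    rw [Real.dist_eq]
    exact lt_of_lt_of_le (hy f hf) (hmin f hf)
  · refine ⟨I, 1, one_pos, fun y hy => ?_⟩
    rw [← htV]
    refine hsub ?_
    intro f hf
    exact absurd ⟨f, hf⟩ hI

/-- Functional-defined strips are weakly open. -/
theorem weak_strip_open_aux {E : Type*} [NormedAddCommGroup E] [NormedSpace ℝ E]
    (ℓ : E →L[ℝ] ℝ) (c r : ℝ) : @IsOpen (WeakSpace ℝ E) _ {x : E | |ℓ x - c| < r} := by
  have hc : Continuous fun x : WeakSpace ℝ E => ℓ x :=
    WeakBilin.eval_continuous ((topDualPairing ℝ E).flip) ℓ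
  have habs : Continuous fun x : WeakSpace ℝ E => |ℓ x - c| :=
    (hc.sub continuous_const).abs
  exact isOpen_lt habs continuous_const

/-- the diameter two property passes from `X` to a closed subspace `Y` whenever
the quotient `X/Y` is finite-dimensional. Weakly open sets are the open sets of the weak
topology `WeakSpace ℝ _`. -/
theorem statement4 {X : Type*} [NormedAddCommGroup X] [NormedSpace ℝ X] [CompleteSpace X]
    (hX : ∀ U : Set X, @IsOpen (WeakSpace ℝ X) _ U → (U ∩ closedBall (0 : X) 1).Nonempty →
      Metric.diam (U ∩ closedBall (0 : X) 1) = 2)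
    (Y : Subspace ℝ X) (hYclosed : IsClosed (Y : Set X))
    (hquot : FiniteDimensional ℝ (X ⧸ Y)) :
    ∀ V : Set Y, @IsOpen (WeakSpace ℝ Y) _ V → (V ∩ closedBall (0 : Y) 1).Nonempty →
      Metric.diam (V ∩ closedBall (0 : Y) 1) = 2 := by
  haveI : IsClosed ((Y : Subspace ℝ X) : Set X) := hYclosed
  intro V hV hne
  obtain ⟨v₀, hv₀V, hv₀B⟩ := hne
  have hv₀n : ‖(v₀ : X)‖ ≤ 1 := by
    have := mem_closedBall_zero_iff.mp hv₀B
    simpa using this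
  -- upper bound
  have hupper : Metric.diam (V ∩ closedBall (0 : Y) 1) ≤ 2 := by
    apply Metric.diam_le_of_forall_dist_le (by norm_num)
    rintro a ⟨-, ha⟩ b ⟨-, hb⟩
    rw [mem_closedBall, dist_zero_right] at ha hb
    calc dist a b ≤ ‖a‖ + ‖b‖ := dist_le_norm_add_norm a b
    _ ≤ 2 := by linarith
  refine le_antisymm hupper (le_of_forall_pos_le_add fun η hη => ?_)
  set ε₁ : ℝ := min η 1 with hε₁def
  have hε₁ : 0 < ε₁ := lt_min hη one_pos
  have hε₁le1 : ε₁ ≤ 1 := min_le_right _ _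
  have hε₁leη : ε₁ ≤ η := min_le_left _ _
  -- basic weak neighborhood in Y
  obtain ⟨s, ε₀, hε₀, hsV⟩ := weak_nhds_basic_aux hV hv₀V
  -- Hahn-Banach extensions
  choose g hg hgnorm using fun f : Y →L[ℝ] ℝ => exists_extension_norm_eq Y f
  set C : ℝ := ((s.sup fun f => ‖f‖₊ : NNReal) : ℝ) + 1 with hCdef
  have hC : 0 < C := by positivity
  have hfC : ∀ f ∈ s, ‖g f‖ ≤ C := by
    intro f hf
    rw [hgnorm f]
    have h1 : ‖f‖₊ ≤ s.sup fun f => ‖f‖₊ := Finset.le_sup hf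
    have h2 : ‖f‖ ≤ ((s.sup fun f => ‖f‖₊ : NNReal) : ℝ) := by
      exact_mod_cast h1
    linarith
  -- quotient data
  set b := Module.finBasis ℝ (X ⧸ Y) with hbdef
  set q : X →L[ℝ] X ⧸ Y :=
    LinearMap.mkContinuous Y.mkQ 1
      (fun x => by simpa using Submodule.Quotient.norm_mk_le Y x) with hqdef
  have hq_apply : ∀ x : X, q x = Submodule.Quotient.mk x := fun x => rfl
  set D : ℝ := (∑ j, ‖b j‖) + 1 with hDdef
  have hsumnn : 0 ≤ ∑ j, ‖b j‖ := Finset.sum_nonneg fun j _ => norm_nonneg _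
  have hD : 0 < D := by positivity
  set δ : ℝ := min (ε₀ / (8 * C)) (ε₁ / 8) with hδdef
  have hδ : 0 < δ := lt_min (by positivity) (by positivity)
  have hδ1 : δ ≤ ε₀ / (8 * C) := min_le_left _ _
  have hδ2 : δ ≤ ε₁ / 8 := min_le_right _ _
  -- the weakly open set in X
  set U : Set X := {x : X | (∀ f ∈ s, |g f x - g f (v₀ : X)| < ε₀ / 2) ∧
      ∀ j, |(LinearMap.toContinuousLinearMap (b.coord j)) (q x)
        - (LinearMap.toContinuousLinearMap (b.coord j)) (q (v₀ : X))| < δ / D} with hUdef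
  have hUopen : @IsOpen (WeakSpace ℝ X) _ U := by
    have hrw : U = (⋂ f ∈ s, {x : X | |g f x - g f (v₀ : X)| < ε₀ / 2}) ∩
        (⋂ j, {x : X | |((LinearMap.toContinuousLinearMap (b.coord j)).comp q) x
          - (LinearMap.toContinuousLinearMap (b.coord j)) (q (v₀ : X))| < δ / D}) := by
      ext x
      simp only [hUdef, mem_setOf_eq, mem_inter_iff, mem_iInter, ContinuousLinearMap.comp_apply]
    rw [hrw]
    exact (isOpen_biInter_finset fun f _ => weak_strip_open_aux (g f) _ _).inter
      (isOpen_iInter_of_finite fun j => weak_strip_open_aux _ _ _)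
  have hv₀U : (v₀ : X) ∈ U ∩ closedBall (0 : X) 1 := by
    constructor
    · refine ⟨fun f hf => ?_, fun j => ?_⟩ <;> simp [hε₀, hε₀.le, div_pos hε₀ two_pos,
        div_pos hδ hD]
    · simpa [mem_closedBall_zero_iff] using hv₀n
  have hdiamU := hX U hUopen ⟨(v₀ : X), hv₀U⟩
  -- extract two far-apart points
  have hfar : ∃ x₁ ∈ U ∩ closedBall (0 : X) 1, ∃ x₂ ∈ U ∩ closedBall (0 : X) 1,
      2 - ε₁ / 2 < dist x₁ x₂ := by
    by_contra hcon
    push_neg at hcon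
    have hle : Metric.diam (U ∩ closedBall (0 : X) 1) ≤ 2 - ε₁ / 2 :=
      Metric.diam_le_of_forall_dist_le (by linarith) fun a ha b hb => hcon a ha b hb
    rw [hdiamU] at hle
    linarith
  obtain ⟨x₁, hx₁, x₂, hx₂, hdist⟩ := hfar
  -- key approximation: every point of U ∩ B_X is 2δ-close to a point of V ∩ B_Y
  have key : ∀ x ∈ U ∩ closedBall (0 : X) 1, ∃ y : Y, y ∈ V ∧ ‖y‖ ≤ 1 ∧
      ‖(y : X) - x‖ ≤ 2 * δ := by
    rintro x ⟨⟨hxf, hxj⟩, hxB⟩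
    have hxn : ‖x‖ ≤ 1 := mem_closedBall_zero_iff.mp hxB
    -- the quotient coordinates of x are small
    have hqv₀ : q (v₀ : X) = 0 := by
      rw [hq_apply]
      exact (Submodule.Quotient.mk_eq_zero Y).mpr v₀.2
    have hcoord : ∀ j, |b.repr (q x) j| < δ / D := by
      intro j
      have := hxj j
      rw [hqv₀] at this
      simpa using this
    -- hence the quotient norm of x is small
    have hqsmall : ‖q x‖ < δ := by
      have h1 : ‖q x‖ ≤ ∑ j, |b.repr (q x) j| * ‖b j‖ := by
        calc ‖q x‖ = ‖∑ j, b.repr (q x) j • b j‖ := by rw [b.sum_repr (q x)]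
        _ ≤ ∑ j, ‖b.repr (q x) j • b j‖ := norm_sum_le _ _
        _ = ∑ j, |b.repr (q x) j| * ‖b j‖ := by
            simp [norm_smul]
      have h2 : ∑ j, |b.repr (q x) j| * ‖b j‖ ≤ (δ / D) * ∑ j, ‖b j‖ := by
        rw [Finset.mul_sum]
        refine Finset.sum_le_sum fun j _ => ?_
        exact mul_le_mul_of_nonneg_right (hcoord j).le (norm_nonneg _)
      have h3 : (δ / D) * (∑ j, ‖b j‖) < (δ / D) * D :=
        mul_lt_mul_of_pos_left (by rw [hDdef]; linarith) (div_pos hδ hD)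
      have h4 : (δ / D) * D = δ := div_mul_cancel₀ δ (ne_of_gt hD)
      linarith
    -- lift to an element of Y close to x
    obtain ⟨m, hm, hmnorm⟩ := Submodule.Quotient.norm_mk_lt (q x) (sub_pos.mpr hqsmall)
    have hmnorm' : ‖m‖ < δ := by linarith
    have hmemY : x - m ∈ Y := by
      rw [← Submodule.Quotient.mk_eq_zero]
      have : Submodule.Quotient.mk (p := Y) m = Submodule.Quotient.mk x := by
        rw [hm, hq_apply]
      rw [Submodule.Quotient.mk_sub, this, sub_self]
    set y₀ : Y := ⟨x - m, hmemY⟩ with hy₀def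
    have hy₀x : ‖(y₀ : X) - x‖ < δ := by
      have hco : (y₀ : X) - x = -m := by
        rw [hy₀def]
        show x - m - x = -m
        abel
      rw [hco, norm_neg]
      exact hmnorm'
    have hy₀n : ‖y₀‖ ≤ 1 + δ := by
      have : ‖(y₀ : X)‖ ≤ 1 + δ := by
        calc ‖(y₀ : X)‖ = ‖((y₀ : X) - x) + x‖ := by congr 1; abel
        _ ≤ ‖(y₀ : X) - x‖ + ‖x‖ := norm_add_le _ _
        _ ≤ 1 + δ := by linarith
      exact this
    -- normalize
    set y : Y := (1 + δ)⁻¹ • y₀ with hydef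
    have h1δ : (0 : ℝ) < 1 + δ := by linarith
    have hinvpos : (0 : ℝ) < (1 + δ)⁻¹ := inv_pos.mpr h1δ
    have hinvmul : (1 + δ)⁻¹ * (1 + δ) = 1 := inv_mul_cancel₀ (ne_of_gt h1δ)
    have hinv1 : (1 + δ)⁻¹ ≤ 1 := inv_le_one_of_one_le₀ (by linarith)
    have hyn : ‖y‖ ≤ 1 := by
      rw [hydef, norm_smul, norm_inv, Real.norm_eq_abs, abs_of_pos h1δ]
      calc (1 + δ)⁻¹ * ‖y₀‖ ≤ (1 + δ)⁻¹ * (1 + δ) :=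
        mul_le_mul_of_nonneg_left hy₀n hinvpos.le
      _ = 1 := hinvmul
    have hyy₀ : ‖(y : X) - (y₀ : X)‖ ≤ δ := by
      have hcoe : (y : X) = (1 + δ)⁻¹ • (y₀ : X) := rfl
      rw [hcoe, show (1 + δ)⁻¹ • (y₀ : X) - (y₀ : X) = ((1 + δ)⁻¹ - 1) • (y₀ : X) by
        rw [sub_smul, one_smul]]
      rw [norm_smul, Real.norm_eq_abs]
      have habs : |(1 + δ)⁻¹ - 1| = δ / (1 + δ) := by
        rw [abs_of_nonpos (sub_nonpos.mpr hinv1)]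
        field_simp
        ring
      rw [habs]
      have hy₀X : ‖(y₀ : X)‖ ≤ 1 + δ := by
        exact hy₀n
      calc δ / (1 + δ) * ‖(y₀ : X)‖ ≤ δ / (1 + δ) * (1 + δ) :=
        mul_le_mul_of_nonneg_left hy₀X (by positivity)
      _ = δ := div_mul_cancel₀ δ (ne_of_gt h1δ)
    have hyx : ‖(y : X) - x‖ ≤ 2 * δ := by
      calc ‖(y : X) - x‖ = ‖((y : X) - (y₀ : X)) + ((y₀ : X) - x)‖ := by congr 1; abel
      _ ≤ ‖(y : X) - (y₀ : X)‖ + ‖(y₀ : X) - x‖ := norm_add_le _ _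
      _ ≤ 2 * δ := by linarith
    -- y belongs to V
    have hyV : y ∈ V := by
      apply hsV
      intro f hf
      have hfy : f y = g f (y : X) := (hg f y).symm
      have hfv : f v₀ = g f (v₀ : X) := (hg f v₀).symm
      rw [hfy, hfv]
      have h1 : |g f (y : X) - g f x| ≤ C * (2 * δ) := by
        calc |g f (y : X) - g f x| = |g f ((y : X) - x)| := by rw [map_sub]
        _ ≤ ‖g f‖ * ‖(y : X) - x‖ := (g f).le_opNorm _
        _ ≤ C * (2 * δ) := by
            apply mul_le_mul (hfC f hf) hyx (norm_nonneg _) hC.le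
      have h2 : |g f x - g f (v₀ : X)| < ε₀ / 2 := hxf f hf
      have h3 : C * (2 * δ) ≤ ε₀ / 4 := by
        have : δ ≤ ε₀ / (8 * C) := hδ1
        calc C * (2 * δ) ≤ C * (2 * (ε₀ / (8 * C))) :=
          mul_le_mul_of_nonneg_left (by linarith) hC.le
        _ = ε₀ / 4 := by field_simp; ring
      calc |g f (y : X) - g f (v₀ : X)|
          ≤ |g f (y : X) - g f x| + |g f x - g f (v₀ : X)| := abs_sub_le _ _ _
      _ < C * (2 * δ) + ε₀ / 2 := add_lt_add_of_le_of_lt h1 h2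
      _ ≤ ε₀ / 4 + ε₀ / 2 := by linarith
      _ < ε₀ := by linarith
    exact ⟨y, hyV, hyn, hyx⟩
  obtain ⟨y₁, hy₁V, hy₁n, hy₁x⟩ := key x₁ hx₁
  obtain ⟨y₂, hy₂V, hy₂n, hy₂x⟩ := key x₂ hx₂
  -- conclude
  have hy₁B : y₁ ∈ V ∩ closedBall (0 : Y) 1 := ⟨hy₁V, mem_closedBall_zero_iff.mpr hy₁n⟩
  have hy₂B : y₂ ∈ V ∩ closedBall (0 : Y) 1 := ⟨hy₂V, mem_closedBall_zero_iff.mpr hy₂n⟩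
  have hbdd : Bornology.IsBounded (V ∩ closedBall (0 : Y) 1) :=
    (Metric.isBounded_closedBall).subset inter_subset_right
  have hdistyy : 2 - ε₁ ≤ dist y₁ y₂ := by
    have h12 : dist x₁ x₂ = ‖x₁ - x₂‖ := dist_eq_norm _ _
    have hycoe : dist y₁ y₂ = ‖(y₁ : X) - (y₂ : X)‖ := by
      rw [dist_eq_norm, ← Submodule.norm_coe]
      norm_cast
    have htri : ‖x₁ - x₂‖ ≤ ‖(y₁ : X) - x₁‖ + ‖(y₁ : X) - (y₂ : X)‖ + ‖(y₂ : X) - x₂‖ := by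
      have heq : x₁ - x₂ = -((y₁ : X) - x₁) + ((y₁ : X) - (y₂ : X)) + ((y₂ : X) - x₂) := by
        abel
      rw [heq]
      have t1 : ‖-((y₁ : X) - x₁) + ((y₁ : X) - (y₂ : X)) + ((y₂ : X) - x₂)‖
          ≤ ‖-((y₁ : X) - x₁) + ((y₁ : X) - (y₂ : X))‖ + ‖(y₂ : X) - x₂‖ := norm_add_le _ _
      have t2 : ‖-((y₁ : X) - x₁) + ((y₁ : X) - (y₂ : X))‖
          ≤ ‖-((y₁ : X) - x₁)‖ + ‖(y₁ : X) - (y₂ : X)‖ := norm_add_le _ _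
      rw [norm_neg] at t2
      linarith
    rw [hycoe]
    rw [h12] at hdist
    linarith
  have hfinal : 2 - ε₁ ≤ Metric.diam (V ∩ closedBall (0 : Y) 1) :=
    le_trans hdistyy (Metric.dist_le_diam_of_mem hbdd hy₁B hy₂B)
  linarith
end

section
/- Let X be a Banach space with weakly octahedral norm and Y a finite-dimensional subspace of X. Then X/Y has weakly octahedral norm; equivalently, Y° = (X/Y)* has the weak-star diameter two property: every nonempty relatively weak-star open subset of B_{Y°} has diameter 2. -/
open Metric Set

/-- The norm of `Z` is weakly octahedral: for every finite-dimensional subspace `M`, every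
`f ∈ B_{Z*}` and every `ε > 0` there is `y ∈ S_Z` with
`‖x + y‖ ≥ (1-ε)(|f x| + ‖y‖)` for all `x ∈ M`. -/
def WeaklyOctahedral (Z : Type*) [NormedAddCommGroup Z] [NormedSpace ℝ Z] : Prop :=
  ∀ M : Subspace ℝ Z, FiniteDimensional ℝ M →
    ∀ f : StrongDual ℝ Z, ‖f‖ ≤ 1 → ∀ ε > (0 : ℝ), ∃ y : Z, ‖y‖ = 1 ∧
      ∀ x ∈ M, (1 - ε) * (|f x| + ‖y‖) ≤ ‖x + y‖

theorem quot_norm_lb {X : Type*} [NormedAddCommGroup X] [NormedSpace ℝ X] (Y : Subspace ℝ X)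
    [IsClosed (Y : Set X)] (z : X ⧸ Y) (c : ℝ)
    (h : ∀ w : X, Submodule.Quotient.mk w = z → c ≤ ‖w‖) : c ≤ ‖z‖ := by
  refine le_of_forall_pos_le_add fun δ hδ => ?_
  obtain ⟨w, hw, hwn⟩ := Submodule.Quotient.norm_mk_lt z hδ
  exact (h w hw).trans hwn.le

theorem comap_findim {X : Type*} [NormedAddCommGroup X] [NormedSpace ℝ X] (Y : Subspace ℝ X)
    [FiniteDimensional ℝ Y] [IsClosed (Y : Set X)] (M : Subspace ℝ (X ⧸ Y))
    (hM : FiniteDimensional ℝ M) : FiniteDimensional ℝ (M.comap Y.mkQ) := by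
  set M' := M.comap Y.mkQ
  let φ : M' →ₗ[ℝ] X ⧸ Y := Y.mkQ.domRestrict M'
  have h1 : Module.rank ℝ (LinearMap.range φ) < Cardinal.aleph0 := by
    have hle : LinearMap.range φ ≤ M := by
      rintro _ ⟨⟨x, hx⟩, rfl⟩
      exact hx
    exact ((Submodule.rank_mono hle).trans_lt (Module.rank_lt_aleph0 ℝ M))
  have h2 : Module.rank ℝ (LinearMap.ker φ) < Cardinal.aleph0 := by
    have hmem : ∀ x : LinearMap.ker φ, ((M'.subtype).comp (LinearMap.ker φ).subtype) x ∈ Y := by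
      rintro ⟨⟨x, hx⟩, hker⟩
      have : Submodule.Quotient.mk x = (0 : X ⧸ Y) := hker
      exact (Submodule.Quotient.mk_eq_zero _).1 this
    have hinj : Function.Injective
        (LinearMap.codRestrict Y ((M'.subtype).comp (LinearMap.ker φ).subtype) hmem) := by
      intro a b hab
      have h : ((M'.subtype).comp (LinearMap.ker φ).subtype) a
          = ((M'.subtype).comp (LinearMap.ker φ).subtype) b := congrArg (Subtype.val : Y → X) hab
      exact Subtype.ext (Subtype.ext h)
    exact (LinearMap.rank_le_of_injective _ hinj).trans_lt (Module.rank_lt_aleph0 ℝ Y)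
  have h3 : Module.rank ℝ M' < Cardinal.aleph0 := by
    rw [← LinearMap.rank_range_add_rank_ker φ]
    exact Cardinal.add_lt_aleph0 h1 h2
  exact IsNoetherian.iff_fg.1 (IsNoetherian.iff_rank_lt_aleph0.2 h3)

/-- if `X` has weakly octahedral norm and `Y` is a finite-dimensional subspace,
then `X/Y` has weakly octahedral norm. -/
theorem statement10 {X : Type*} [NormedAddCommGroup X] [NormedSpace ℝ X] [CompleteSpace X]
    (hX : WeaklyOctahedral X)
    (Y : Subspace ℝ X) [FiniteDimensional ℝ Y] [IsClosed (Y : Set X)] :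
    WeaklyOctahedral (X ⧸ Y) := by
  intro M hMfd f hf ε hε
  set ε' : ℝ := min ε 1 / 2 with hε'def
  have hε'0 : 0 < ε' := by
    have : 0 < min ε 1 := lt_min hε one_pos
    linarith
  have hε'half : ε' ≤ 1 / 2 := by
    have : min ε 1 ≤ 1 := min_le_right _ _
    linarith
  have hεε' : ε' ≤ ε - ε' := by
    have : min ε 1 ≤ ε := min_le_left _ _
    simp only [hε'def]; linarith
  set M' : Subspace ℝ X := M.comap Y.mkQ with hM'def
  have hM'fd : FiniteDimensional ℝ M' := comap_findim Y M hMfd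
  -- the composed functional
  have hgb : ∀ x : X, ‖(f.toLinearMap.comp Y.mkQ) x‖ ≤ 1 * ‖x‖ := by
    intro x
    calc ‖f (Submodule.Quotient.mk x)‖ ≤ ‖f‖ * ‖(Submodule.Quotient.mk x : X ⧸ Y)‖ :=
          f.le_opNorm _
      _ ≤ 1 * ‖x‖ := by
          apply mul_le_mul hf (Submodule.Quotient.norm_mk_le (S := Y) x) (norm_nonneg _) zero_le_one
  set g : StrongDual ℝ X := LinearMap.mkContinuous (f.toLinearMap.comp Y.mkQ) 1 hgb
    with hgdef
  have hg : ‖g‖ ≤ 1 := LinearMap.mkContinuous_norm_le _ zero_le_one _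
  have hgapp : ∀ x : X, g x = f (Submodule.Quotient.mk x) := fun x => rfl
  obtain ⟨y, hy1, hy⟩ := hX M' hM'fd g hg ε' hε'0
  -- key estimate
  have hkey : ∀ z : X ⧸ Y, z ∈ M →
      (1 - ε') * (|f z| + 1) ≤ ‖z + Submodule.Quotient.mk y‖ := by
    intro z hz
    apply quot_norm_lb
    intro w hw
    have hwy : Submodule.Quotient.mk (w - y) = z := by
      have : Submodule.Quotient.mk (w - y) = (Submodule.Quotient.mk w : X ⧸ Y)
          - Submodule.Quotient.mk y := by
        rw [Submodule.Quotient.mk_sub]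
      rw [this, hw]; abel
    have hwM' : w - y ∈ M' := by
      simp only [hM'def, Submodule.mem_comap, Submodule.mkQ_apply, hwy]
      exact hz
    have h1 := hy (w - y) hwM'
    rw [hgapp, hwy, hy1] at h1
    calc (1 - ε') * (|f z| + 1) ≤ ‖(w - y) + y‖ := h1
      _ = ‖w‖ := by rw [sub_add_cancel]
  -- norm of π y is close to 1
  have hq1 : (1 - ε') ≤ ‖(Submodule.Quotient.mk y : X ⧸ Y)‖ := by
    have := hkey 0 (zero_mem M)
    simpa using this
  have hqle : ‖(Submodule.Quotient.mk y : X ⧸ Y)‖ ≤ 1 := by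
    simpa [hy1] using Submodule.Quotient.norm_mk_le (S := Y) y
  set t : ℝ := ‖(Submodule.Quotient.mk y : X ⧸ Y)‖ with htdef
  have ht0 : 0 < t := lt_of_lt_of_le (by linarith) hq1
  refine ⟨t⁻¹ • Submodule.Quotient.mk y, ?_, ?_⟩
  · rw [norm_smul, norm_inv, norm_norm, ← htdef, inv_mul_cancel₀ ht0.ne']
  · intro z hz
    have h1 := hkey z hz
    have hnorm1 : ‖t⁻¹ • (Submodule.Quotient.mk y : X ⧸ Y)‖ = 1 := by
      rw [norm_smul, norm_inv, norm_norm, ← htdef, inv_mul_cancel₀ ht0.ne']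
    have hdist : ‖t⁻¹ • (Submodule.Quotient.mk y : X ⧸ Y) - Submodule.Quotient.mk y‖
        = 1 - t := by
      have : t⁻¹ • (Submodule.Quotient.mk y : X ⧸ Y) - Submodule.Quotient.mk y
          = (t⁻¹ - 1) • (Submodule.Quotient.mk y : X ⧸ Y) := by
        rw [sub_smul, one_smul]
      rw [this, norm_smul, Real.norm_eq_abs, ← htdef]
      have h2 : (1 : ℝ) ≤ t⁻¹ := (one_le_inv₀ ht0).mpr hqle
      rw [abs_of_nonneg (by linarith)]
      field_simp
    have htri : ‖z + Submodule.Quotient.mk y‖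
        ≤ ‖z + t⁻¹ • Submodule.Quotient.mk y‖
          + ‖t⁻¹ • (Submodule.Quotient.mk y : X ⧸ Y) - Submodule.Quotient.mk y‖ := by
      have : z + Submodule.Quotient.mk y
          = (z + t⁻¹ • Submodule.Quotient.mk y)
            - (t⁻¹ • (Submodule.Quotient.mk y : X ⧸ Y) - Submodule.Quotient.mk y) := by abel
      rw [this]
      exact norm_sub_le _ _
    rw [hdist] at htri
    rw [hnorm1]
    have habs : 0 ≤ |f z| := abs_nonneg _
    nlinarith [h1, htri, hq1, habs, hεε', hε'0.le]
end

section
/- The diameter two properties are not three-space properties: there exists a Banach space Z and a closed subspace W of Z such that both W and Z/W have the strong diameter two property (hence all diameter two properties), but Z fails the slice diameter two property (its unit ball has slices of arbitrarily small diameter). -/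
open Metric Set

variable {Z : Type*} [NormedAddCommGroup Z] [NormedSpace ℝ Z]

/-- A slice of a set `C`: `{x ∈ C | f x > sup f(C) - α}`. -/
def Slice (C : Set Z) (f : Z →L[ℝ] ℝ) (α : ℝ) : Set Z :=
  {x ∈ C | sSup (f '' C) - α < f x}

/-- The convex combination `∑ wᵢ Sᵢ` of the sets `Sᵢ` with weights `wᵢ`. -/
def convComb {n : ℕ} (w : Fin n → ℝ) (S : Fin n → Set Z) : Set Z :=
  {y | ∃ x : Fin n → Z, (∀ i, x i ∈ S i) ∧ y = ∑ i, w i • x i}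

/-- The strong diameter two property. -/
def SD2P (Z : Type*) [NormedAddCommGroup Z] [NormedSpace ℝ Z] : Prop :=
  ∀ (n : ℕ) (w : Fin n → ℝ) (f : Fin n → Z →L[ℝ] ℝ) (α : Fin n → ℝ),
    (∀ i, 0 ≤ w i) → (∑ i, w i) = 1 → (∀ i, f i ≠ 0) → (∀ i, 0 < α i) →
    Metric.diam (convComb w (fun i => Slice (closedBall (0 : Z) 1) (f i) (α i))) = 2

set_option linter.unusedTactic false
set_option linter.unreachableTactic false
set_option maxHeartbeats 1000000

noncomputable section AuxiliaryConstruction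

open ZeroAtInftyContinuousMap NNReal

abbrev c0 : Type := ZeroAtInftyContinuousMap ℕ ℝ

lemma coord_le_norm (x : c0) (n : ℕ) : |x n| ≤ ‖x‖ := by
  have := BoundedContinuousFunction.norm_coe_le_norm x.toBCF n
  simpa using this

lemma norm_le_iff (x : c0) {C : ℝ} (hC : 0 ≤ C) : ‖x‖ ≤ C ↔ ∀ n, |x n| ≤ C := by
  rw [← norm_toBCF_eq_norm, BoundedContinuousFunction.norm_le hC]
  simp [Real.norm_eq_abs]

def ee (N : ℕ) : c0 :=
  ⟨⟨fun m => if m = N then (1:ℝ) else 0, continuous_of_discreteTopology⟩, by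
    have h : Filter.cocompact ℕ = Filter.cofinite := Filter.cocompact_eq_cofinite ℕ
    rw [h]
    refine Filter.Tendsto.congr' ?_ tendsto_const_nhds
    filter_upwards [Filter.eventually_cofinite_ne N] with m hm
    simp [hm]⟩

@[simp] lemma ee_apply (N m : ℕ) : ee N m = if m = N then (1:ℝ) else 0 := rfl

@[simp] lemma norm_ee (N : ℕ) : ‖ee N‖ = 1 := by
  refine le_antisymm ((norm_le_iff _ zero_le_one).2 fun n => ?_) ?_
  · by_cases h : n = N <;> simp [h]
  · have := coord_le_norm (ee N) N
    simpa using this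

lemma sum_apply' (s : Finset ℕ) (g : ℕ → c0) (m : ℕ) :
    (∑ N ∈ s, g N) m = ∑ N ∈ s, g N m := by
  classical
  induction s using Finset.induction with
  | empty => simp
  | @insert a s h ih => simp_all [Finset.sum_insert h]

/-- sign -/
def sg (r : ℝ) : ℝ := if 0 ≤ r then 1 else -1

lemma sg_mul_self (r : ℝ) : sg r * r = |r| := by
  unfold sg; split
  · rw [one_mul, abs_of_nonneg ‹_›]
  · rw [neg_one_mul, abs_of_neg (lt_of_not_ge ‹_›)]

lemma abs_sg (r : ℝ) : |sg r| ≤ 1 := by unfold sg; split <;> simp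

/-- for any continuous functional, only finitely many `ee N` have `|f (ee N)| ≥ δ`. -/
lemma bad_finite (f : c0 →L[ℝ] ℝ) {δ : ℝ} (hδ : 0 < δ) : {N : ℕ | δ ≤ |f (ee N)|}.Finite := by
  classical
  by_contra hinf
  have hinf' : {N : ℕ | δ ≤ |f (ee N)|}.Infinite := hinf
  obtain ⟨s, hs_sub, hs_card⟩ := hinf'.exists_subset_card_eq (⌈‖f‖ / δ⌉₊ + 1)
  set x : c0 := ∑ N ∈ s, sg (f (ee N)) • ee N with hx
  have hxm : ∀ m, x m = if m ∈ s then sg (f (ee m)) else 0 := by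
    intro m
    rw [hx, sum_apply']
    have : ∀ N ∈ s, (sg (f (ee N)) • ee N) m = if N = m then sg (f (ee N)) else 0 := by
      intro N _
      rcases eq_or_ne N m with h | h
      · subst h; simp
      · have h2 : (ee N) m = 0 := by simp [h.symm]
        simp [h, h2]
    rw [Finset.sum_congr rfl this, Finset.sum_ite_eq' s m (fun N => sg (f (ee N)))]
  have hxnorm : ‖x‖ ≤ 1 := by
    rw [norm_le_iff _ zero_le_one]
    intro n
    rw [hxm n]
    split
    · exact abs_sg _
    · simp
  have hfx : f x = ∑ N ∈ s, |f (ee N)| := by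
    rw [hx, map_sum]
    refine Finset.sum_congr rfl fun N _ => ?_
    rw [map_smul, smul_eq_mul, sg_mul_self]
  have h1 : (↑(⌈‖f‖ / δ⌉₊ + 1) : ℝ) * δ ≤ f x := by
    rw [hfx, ← hs_card, ← nsmul_eq_mul, ← Finset.sum_const]
    exact Finset.sum_le_sum fun N hN => hs_sub hN
  have h2 : f x ≤ ‖f‖ := by
    calc f x ≤ |f x| := le_abs_self _
    _ ≤ ‖f‖ * ‖x‖ := f.le_opNorm x
    _ ≤ ‖f‖ * 1 := by nlinarith [norm_nonneg f]
    _ = ‖f‖ := mul_one _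
  have h3 : ‖f‖ / δ < ↑(⌈‖f‖ / δ⌉₊ + 1) := by
    push_cast
    exact lt_of_le_of_lt (Nat.le_ceil _) (by linarith)
  rw [div_lt_iff₀ hδ] at h3
  linarith


lemma ssup_ball {X : Type*} [NormedAddCommGroup X] [NormedSpace ℝ X] (f : X →L[ℝ] ℝ) :
    sSup (f '' closedBall (0 : X) 1) = ‖f‖ := by
  have hne : (f '' closedBall (0 : X) 1).Nonempty :=
    ⟨f 0, mem_image_of_mem f (mem_closedBall_self zero_le_one)⟩
  have hub : ∀ y ∈ f '' closedBall (0 : X) 1, y ≤ ‖f‖ := by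
    rintro y ⟨x, hx, rfl⟩
    calc f x ≤ |f x| := le_abs_self _
    _ ≤ ‖f‖ * ‖x‖ := f.le_opNorm x
    _ ≤ ‖f‖ * 1 := by
        have := mem_closedBall_zero_iff.1 hx
        nlinarith [norm_nonneg f]
    _ = ‖f‖ := mul_one _
  refine le_antisymm (csSup_le hne hub) ?_
  have h0 : (0:ℝ) ≤ sSup (f '' closedBall (0 : X) 1) := by
    have := le_csSup ⟨‖f‖, hub⟩ (mem_image_of_mem f (mem_closedBall_self (zero_le_one (α := ℝ))))
    simpa using this
  refine f.opNorm_le_bound h0 ?_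
  · intro x
    rcases eq_or_ne x 0 with rfl | hx
    · simp
    · have hx1 : (‖x‖⁻¹ • x) ∈ closedBall (0 : X) 1 := by
        rw [mem_closedBall_zero_iff, norm_smul, norm_inv, norm_norm,
          inv_mul_cancel₀ (norm_ne_zero_iff.2 hx)]
      have hx2 : (-(‖x‖⁻¹ • x)) ∈ closedBall (0 : X) 1 := by
        rwa [mem_closedBall_zero_iff, norm_neg, ← mem_closedBall_zero_iff]
      have h1 : f (‖x‖⁻¹ • x) ≤ sSup (f '' closedBall (0 : X) 1) :=
        le_csSup ⟨‖f‖, hub⟩ (mem_image_of_mem f hx1)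
      have h2 : f (-(‖x‖⁻¹ • x)) ≤ sSup (f '' closedBall (0 : X) 1) :=
        le_csSup ⟨‖f‖, hub⟩ (mem_image_of_mem f hx2)
      rw [map_neg] at h2
      rw [map_smul, smul_eq_mul] at h1 h2
      have hnx : ‖x‖ ≠ 0 := norm_ne_zero_iff.2 hx
      have habs : |f x| ≤ ‖x‖ * sSup (f '' closedBall (0 : X) 1) := by
        rcases abs_cases (f x) with ⟨h, _⟩ | ⟨h, _⟩ <;> rw [h]
        · calc f x = ‖x‖ * (‖x‖⁻¹ * f x) := by
                field_simp
          _ ≤ ‖x‖ * sSup (f '' closedBall (0 : X) 1) := by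
                apply mul_le_mul_of_nonneg_left h1 (norm_nonneg x)
        · calc -f x = ‖x‖ * -(‖x‖⁻¹ * f x) := by
                field_simp
          _ ≤ ‖x‖ * sSup (f '' closedBall (0 : X) 1) := by
                apply mul_le_mul_of_nonneg_left h2 (norm_nonneg x)
      rw [Real.norm_eq_abs]
      linarith [habs]


lemma convComb_subset {n : ℕ} {w : Fin n → ℝ} (hw : ∀ i, 0 ≤ w i) (hsum : ∑ i, w i = 1)
    {S : Fin n → Set Z} (hS : ∀ i, S i ⊆ closedBall 0 1) :
    convComb w S ⊆ closedBall (0 : Z) 1 := by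
  rintro y ⟨x, hx, rfl⟩
  rw [mem_closedBall_zero_iff]
  calc ‖∑ i, w i • x i‖ ≤ ∑ i, ‖w i • x i‖ := norm_sum_le _ _
  _ ≤ ∑ i, w i := Finset.sum_le_sum (fun i _ => by
        rw [norm_smul, Real.norm_eq_abs, abs_of_nonneg (hw i)]
        nlinarith [mem_closedBall_zero_iff.1 (hS i (hx i)), hw i, norm_nonneg (x i)])
  _ = 1 := hsum

lemma slice_subset (C : Set Z) (f : Z →L[ℝ] ℝ) (α : ℝ) : Slice C f α ⊆ C := fun _ h => h.1

theorem sd2p_c0 : SD2P c0 := by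
  intro n w f α hw hsum hf hα
  classical
  -- choose a far coordinate N
  have hbadfin : (⋃ i, {N : ℕ | α i / 4 ≤ |f i (ee N)|}).Finite :=
    Set.finite_iUnion fun i => bad_finite (f i) (by linarith [hα i])
  obtain ⟨N, hN⟩ : ∃ N : ℕ, ∀ i, |f i (ee N)| < α i / 4 := by
    obtain ⟨N, hN⟩ := (hbadfin.infinite_compl).nonempty
    refine ⟨N, fun i => ?_⟩
    by_contra hcon
    exact hN (Set.mem_iUnion.2 ⟨i, not_lt.1 hcon⟩)
  -- choose near-optimal points in the slices
  have hx : ∀ i, ∃ x ∈ closedBall (0:c0) 1, ‖f i‖ - α i / 2 < f i x := by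
    intro i
    have hne : ((f i) '' closedBall (0:c0) 1).Nonempty :=
      ⟨_, mem_image_of_mem _ (mem_closedBall_self zero_le_one)⟩
    have hlt : ‖f i‖ - α i / 2 < sSup ((f i) '' closedBall (0:c0) 1) := by
      rw [ssup_ball]; linarith [hα i]
    obtain ⟨y, ⟨x, hxx, rfl⟩, hy⟩ := exists_lt_of_lt_csSup hne hlt
    exact ⟨x, hxx, hy⟩
  choose x hxball hxslice using hx
  have key : ∀ (i) (c : ℝ), |c| ≤ 1 →
      x i + (c - x i N) • ee N ∈ Slice (closedBall (0:c0) 1) (f i) (α i) := by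
    intro i c hc
    have hxiN : |x i N| ≤ 1 :=
      le_trans (coord_le_norm _ _) (mem_closedBall_zero_iff.1 (hxball i))
    constructor
    · rw [mem_closedBall_zero_iff, norm_le_iff _ zero_le_one]
      intro m
      rcases eq_or_ne m N with h | h
      · have hm : (x i + (c - x i N) • ee N) m = c := by subst h; simp
        rw [hm]; exact hc
      · have hm : (x i + (c - x i N) • ee N) m = x i m := by simp [h]
        rw [hm]
        exact le_trans (coord_le_norm _ _) (mem_closedBall_zero_iff.1 (hxball i))
    · rw [ssup_ball]
      have h1 : (f i) (x i + (c - x i N) • ee N) = f i (x i) + (c - x i N) * f i (ee N) := by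
        rw [map_add, map_smul, smul_eq_mul]
      have habs : |c - x i N| ≤ 2 := by
        calc |c - x i N| ≤ |c| + |x i N| := abs_sub _ _
        _ ≤ 2 := by linarith
      have h2 : |(c - x i N) * f i (ee N)| ≤ 2 * (α i / 4) := by
        rw [abs_mul]
        nlinarith [abs_nonneg (f i (ee N)), le_of_lt (hN i), abs_nonneg (c - x i N)]
      rw [h1]
      have h3 := neg_abs_le ((c - x i N) * f i (ee N))
      have := hxslice i
      linarith
  set S : Fin n → Set c0 := fun i => Slice (closedBall (0:c0) 1) (f i) (α i) with hS
  have hsub : convComb w S ⊆ closedBall (0:c0) 1 :=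
    convComb_subset hw hsum fun i => slice_subset _ _ _
  have hdle : Metric.diam (convComb w S) ≤ 2 := by
    refine Metric.diam_le_of_forall_dist_le (by norm_num) fun z hz z' hz' => ?_
    have h1 := mem_closedBall_zero_iff.1 (hsub hz)
    have h2 := mem_closedBall_zero_iff.1 (hsub hz')
    calc dist z z' = ‖z - z'‖ := dist_eq_norm _ _
    _ ≤ ‖z‖ + ‖z'‖ := norm_sub_le _ _
    _ ≤ 2 := by linarith
  refine le_antisymm hdle ?_
  set u : Fin n → c0 := fun i => x i + ((1:ℝ) - x i N) • ee N with hu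
  set v : Fin n → c0 := fun i => x i + ((-1:ℝ) - x i N) • ee N with hv
  have hp : (∑ i, w i • u i) ∈ convComb w S := ⟨u, fun i => key i 1 (by norm_num), rfl⟩
  have hq : (∑ i, w i • v i) ∈ convComb w S := ⟨v, fun i => key i (-1) (by norm_num), rfl⟩
  have hdiff : (∑ i, w i • u i) - (∑ i, w i • v i) = (2:ℝ) • ee N := by
    rw [← Finset.sum_sub_distrib]
    have : ∀ i ∈ Finset.univ, w i • u i - w i • v i = w i • ((2:ℝ) • ee N) := by
      intro i _
      show w i • (x i + ((1:ℝ) - x i N) • ee N) - w i • (x i + ((-1:ℝ) - x i N) • ee N)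
        = w i • ((2:ℝ) • ee N)
      module
    rw [Finset.sum_congr rfl this, ← Finset.sum_smul, hsum, one_smul]
  have h2e : ‖(2:ℝ) • ee N‖ = 2 := by
    refine le_antisymm ((norm_le_iff _ (by norm_num)).2 fun m => ?_) ?_
    · rcases eq_or_ne m N with h | h
      · have : ((2:ℝ) • ee N) m = 2 := by subst h; simp
        rw [this]; norm_num
      · have : ((2:ℝ) • ee N) m = 0 := by simp [h]
        rw [this]; norm_num
    · have := coord_le_norm ((2:ℝ) • ee N) N
      have h2 : ((2:ℝ) • ee N) N = 2 := by simp
      rw [h2] at this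
      linarith [le_abs_self (2:ℝ)]
  have h2 : dist (∑ i, w i • u i) (∑ i, w i • v i) = 2 := by
    rw [dist_eq_norm, hdiff, h2e]
  calc (2:ℝ) = dist (∑ i, w i • u i) (∑ i, w i • v i) := h2.symm
  _ ≤ Metric.diam (convComb w S) :=
      Metric.dist_le_diam_of_mem ((isBounded_closedBall).subset hsub) hp hq


lemma sd2p_transfer {X Y : Type*} [NormedAddCommGroup X] [NormedSpace ℝ X]
    [NormedAddCommGroup Y] [NormedSpace ℝ Y] (e : X ≃ₗᵢ[ℝ] Y) (h : SD2P X) : SD2P Y := by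
  intro n w f α hw hsum hf hα
  set g : Fin n → X →L[ℝ] ℝ := fun i => (f i).comp (e : X →L[ℝ] Y) with hg
  have hball : e '' closedBall (0 : X) 1 = closedBall (0 : Y) 1 := by
    ext y
    constructor
    · rintro ⟨x, hx, rfl⟩
      rw [mem_closedBall_zero_iff] at hx ⊢
      rwa [e.norm_map]
    · intro hy
      refine ⟨e.symm y, ?_, e.apply_symm_apply y⟩
      rw [mem_closedBall_zero_iff] at hy ⊢
      rwa [e.symm.norm_map]
  have hgf : ∀ (i) (x : X), g i x = f i (e x) := fun i x => rfl
  have himg : ∀ i, (g i) '' closedBall (0 : X) 1 = (f i) '' closedBall (0 : Y) 1 := by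
    intro i
    rw [← hball, ← Set.image_comp]
    rfl
  have hslice : ∀ i, e '' Slice (closedBall (0 : X) 1) (g i) (α i)
      = Slice (closedBall (0 : Y) 1) (f i) (α i) := by
    intro i
    ext y
    simp only [Slice, mem_image, mem_setOf_eq]
    constructor
    · rintro ⟨x, ⟨hx1, hx2⟩, rfl⟩
      constructor
      · rw [mem_closedBall_zero_iff] at hx1 ⊢
        rwa [e.norm_map]
      · rw [himg i] at hx2
        exact hx2
    · rintro ⟨hy1, hy2⟩
      refine ⟨e.symm y, ⟨?_, ?_⟩, e.apply_symm_apply y⟩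
      · rw [mem_closedBall_zero_iff] at hy1 ⊢
        rwa [e.symm.norm_map]
      · rw [himg i, hgf]
        simpa using hy2
  have hgne : ∀ i, g i ≠ 0 := by
    intro i hcon
    apply hf i
    ext y
    have := congrArg (fun (φ : X →L[ℝ] ℝ) => φ (e.symm y)) hcon
    simpa [hgf] using this
  have hcc : e '' convComb w (fun i => Slice (closedBall (0 : X) 1) (g i) (α i))
      = convComb w (fun i => Slice (closedBall (0 : Y) 1) (f i) (α i)) := by
    ext y
    constructor
    · rintro ⟨z, ⟨x, hx, rfl⟩, rfl⟩
      refine ⟨fun i => e (x i), fun i => ?_, ?_⟩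
      · show e (x i) ∈ Slice (closedBall (0 : Y) 1) (f i) (α i)
        rw [← hslice i]
        exact mem_image_of_mem e (hx i)
      · rw [map_sum]
        simp
    · rintro ⟨x, hx, rfl⟩
      refine ⟨∑ i, w i • e.symm (x i), ⟨fun i => e.symm (x i), fun i => ?_, rfl⟩, ?_⟩
      · have hx' : x i ∈ Slice (closedBall (0 : Y) 1) (f i) (α i) := hx i
        rw [← hslice i] at hx'
        obtain ⟨z, hz, hzx⟩ := hx'
        show e.symm (x i) ∈ Slice (closedBall (0 : X) 1) (g i) (α i)
        rwa [← hzx, e.symm_apply_apply]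
      · rw [map_sum]
        simp
  calc Metric.diam (convComb w (fun i => Slice (closedBall (0 : Y) 1) (f i) (α i)))
      = Metric.diam (e '' convComb w (fun i => Slice (closedBall (0 : X) 1) (g i) (α i))) := by
        rw [hcc]
  _ = Metric.diam (convComb w (fun i => Slice (closedBall (0 : X) 1) (g i) (α i))) :=
        e.isometry.diam_image _
  _ = 2 := h n w g α hw hsum hgne hα


/-! ## The renormed space Z -/

def tl (x : c0) : c0 := x - x 0 • ee 0

lemma tl_apply (x : c0) (m : ℕ) : tl x m = x m - x 0 * (if m = 0 then 1 else 0) := by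
  simp [tl]

lemma norm_smul_c0 (a : ℝ) (x : c0) : ‖a • x‖ = |a| * ‖x‖ := norm_smul a x

lemma norm_tl_le (x : c0) : ‖tl x‖ ≤ ‖x‖ := by
  rw [norm_le_iff _ (norm_nonneg x)]
  intro m
  rw [tl_apply]
  rcases eq_or_ne m 0 with rfl | h
  · simp
  · simp only [if_neg h, mul_zero, sub_zero]
    exact coord_le_norm x m

lemma tl_add (x y : c0) : tl (x + y) = tl x + tl y := by
  unfold tl
  ext m
  simp
  by_cases h : m = 0 <;> simp [h] <;> ring

lemma tl_smul (a : ℝ) (x : c0) : tl (a • x) = a • tl x := by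
  unfold tl
  ext m
  simp
  by_cases h : m = 0 <;> simp [h] <;> ring

lemma tl_neg (x : c0) : tl (-x) = -tl x := by
  unfold tl
  ext m
  simp
  by_cases h : m = 0 <;> simp [h] <;> ring

def MM (z : c0 × c0) : ℝ := max ‖tl z.1‖ ‖z.2‖

def NN (z : c0 × c0) : ℝ := max (MM z) ((|z.1 0| + MM z) / 2)

lemma MM_nonneg (z : c0 × c0) : 0 ≤ MM z := le_trans (norm_nonneg _) (le_max_right _ _)

lemma NN_nonneg (z : c0 × c0) : 0 ≤ NN z := le_trans (MM_nonneg z) (le_max_left _ _)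

lemma MM_le_NN (z : c0 × c0) : MM z ≤ NN z := le_max_left _ _

lemma MM_add_le (z w : c0 × c0) : MM (z + w) ≤ MM z + MM w := by
  unfold MM
  have h1 : ‖tl (z + w).1‖ ≤ ‖tl z.1‖ + ‖tl w.1‖ := by
    have : tl (z + w).1 = tl z.1 + tl w.1 := tl_add _ _
    rw [this]; exact norm_add_le _ _
  have h2 : ‖(z + w).2‖ ≤ ‖z.2‖ + ‖w.2‖ := norm_add_le _ _
  refine max_le ?_ ?_
  · calc ‖tl (z+w).1‖ ≤ ‖tl z.1‖ + ‖tl w.1‖ := h1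
    _ ≤ _ := add_le_add (le_max_left _ _) (le_max_left _ _)
  · calc ‖(z+w).2‖ ≤ ‖z.2‖ + ‖w.2‖ := h2
    _ ≤ _ := add_le_add (le_max_right _ _) (le_max_right _ _)

lemma NN_add_le (z w : c0 × c0) : NN (z + w) ≤ NN z + NN w := by
  unfold NN
  have hM := MM_add_le z w
  have ha : |(z + w).1 0| ≤ |z.1 0| + |w.1 0| := by
    have : (z + w).1 0 = z.1 0 + w.1 0 := rfl
    rw [this]; exact abs_add_le _ _
  refine max_le ?_ ?_
  · calc MM (z + w) ≤ MM z + MM w := hM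
    _ ≤ _ := add_le_add (le_max_left _ _) (le_max_left _ _)
  · have hb1 := le_max_right (MM z) ((|z.1 0| + MM z) / 2)
    have hb2 := le_max_right (MM w) ((|w.1 0| + MM w) / 2)
    linarith

lemma MM_smul (a : ℝ) (z : c0 × c0) : MM (a • z) = |a| * MM z := by
  unfold MM
  have h1 : tl (a • z).1 = a • tl z.1 := tl_smul a z.1
  have h2 : ‖(a • z).2‖ = |a| * ‖z.2‖ := norm_smul_c0 a z.2
  rw [h1, norm_smul_c0, h2, ← mul_max_of_nonneg _ _ (abs_nonneg a)]

lemma NN_smul (a : ℝ) (z : c0 × c0) : NN (a • z) = |a| * NN z := by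
  unfold NN
  rw [MM_smul]
  have ha : |(a • z).1 0| = |a| * |z.1 0| := by
    have : (a • z).1 0 = a * z.1 0 := rfl
    rw [this, abs_mul]
  rw [ha, mul_max_of_nonneg _ _ (abs_nonneg a)]
  congr 1
  ring

lemma NN_eq_zero {z : c0 × c0} (h : NN z = 0) : z = 0 := by
  have hM : MM z ≤ 0 := h ▸ MM_le_NN z
  have h1 : ‖tl z.1‖ = 0 := le_antisymm (le_trans (le_max_left _ ‖z.2‖) hM) (norm_nonneg _)
  have h2 : ‖z.2‖ = 0 := le_antisymm (le_trans (le_max_right ‖tl z.1‖ _) hM) (norm_nonneg _)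
  have h3 : |z.1 0| = 0 := by
    have h4 : (|z.1 0| + MM z) / 2 ≤ NN z := le_max_right _ _
    rw [h] at h4
    have hM0 : MM z = 0 := le_antisymm hM (MM_nonneg z)
    have := abs_nonneg (z.1 0)
    nlinarith
  have hz1 : z.1 = 0 := by
    have htl : tl z.1 = 0 := norm_eq_zero.1 h1
    have h0 : z.1 0 = 0 := abs_eq_zero.1 h3
    have : z.1 - z.1 0 • ee 0 = 0 := htl
    rw [h0] at this
    simpa using this
  have hz2 : z.2 = 0 := norm_eq_zero.1 h2
  exact Prod.ext hz1 hz2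

/-! ## Zc : the renormed product -/

def Zc : Type := c0 × c0

instance : AddCommGroup Zc := inferInstanceAs (AddCommGroup (c0 × c0))
instance : Module ℝ Zc := inferInstanceAs (Module ℝ (c0 × c0))

instance Zc.normedAddCommGroup : NormedAddCommGroup Zc :=
  AddGroupNorm.toNormedAddCommGroup
    { toFun := fun z => NN z
      map_zero' := by
        show NN 0 = 0
        unfold NN MM tl
        norm_num
      add_le' := fun z w => NN_add_le z w
      neg' := by
        intro z
        show NN (-z) = NN z
        have : (-z : c0 × c0) = (-1 : ℝ) • z := by module
        rw [this]; exact (NN_smul (-1) z).trans (by norm_num)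
      eq_zero_of_map_eq_zero' := fun z h => NN_eq_zero h }

lemma Zc.norm_def (z : Zc) : ‖z‖ = NN z := rfl

instance Zc.normedSpace : NormedSpace ℝ Zc :=
  ⟨fun a z => le_of_eq (by rw [Zc.norm_def, Zc.norm_def, Real.norm_eq_abs]; exact NN_smul a z)⟩

lemma Zc.norm_le_prod (z : Zc) : ‖z‖ ≤ max ‖(z : c0 × c0).1‖ ‖(z : c0 × c0).2‖ := by
  rw [Zc.norm_def]
  have hM : MM z ≤ max ‖(z : c0 × c0).1‖ ‖(z : c0 × c0).2‖ :=
    max_le_max (norm_tl_le _) le_rfl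
  refine max_le hM ?_
  have h0 : |(z : c0 × c0).1 0| ≤ ‖(z : c0 × c0).1‖ := coord_le_norm _ _
  have := le_max_left ‖(z : c0 × c0).1‖ ‖(z : c0 × c0).2‖
  linarith

lemma Zc.snd_norm_le (z : Zc) : ‖(z : c0 × c0).2‖ ≤ ‖z‖ :=
  le_trans (le_max_right _ _) (MM_le_NN z)

lemma Zc.coord0_le (z : Zc) : |(z : c0 × c0).1 0| ≤ 2 * ‖z‖ := by
  rw [Zc.norm_def]
  have h := le_max_right (MM z) ((|(z : c0 × c0).1 0| + MM z) / 2)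
  have := MM_nonneg z
  unfold NN
  set Q := max (MM z) ((|(z : c0 × c0).1 0| + MM z) / 2)
  linarith

lemma Zc.fst_norm_le (z : Zc) : ‖(z : c0 × c0).1‖ ≤ 3 * ‖z‖ := by
  have h1 : ‖tl (z : c0 × c0).1‖ ≤ ‖z‖ := le_trans (le_max_left _ _) (MM_le_NN z)
  have h2 := Zc.coord0_le z
  have h3 : ‖(z : c0 × c0).1‖ ≤ ‖tl (z : c0 × c0).1‖ + |(z : c0 × c0).1 0| := by
    have : (z : c0 × c0).1 = tl (z : c0 × c0).1 + (z : c0 × c0).1 0 • ee 0 := by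
      unfold tl; module
    calc ‖(z : c0 × c0).1‖ = ‖tl (z : c0 × c0).1 + (z : c0 × c0).1 0 • ee 0‖ := by rw [← this]
    _ ≤ ‖tl (z : c0 × c0).1‖ + ‖(z : c0 × c0).1 0 • ee 0‖ := norm_add_le _ _
    _ = ‖tl (z : c0 × c0).1‖ + |(z : c0 × c0).1 0| := by rw [norm_smul_c0, norm_ee, mul_one]
  linarith

def toZc : c0 × c0 → Zc := fun z => z

lemma dist_toZc (a b : c0 × c0) : dist (toZc a) (toZc b) = NN (a - b) := by
  rw [dist_eq_norm]; rfl

instance Zc.completeSpace : CompleteSpace Zc := by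
  have hLip : LipschitzWith 1 toZc := by
    apply LipschitzWith.of_dist_le_mul
    intro a b
    rw [dist_toZc, Prod.dist_eq, dist_eq_norm, dist_eq_norm]
    have := Zc.norm_le_prod (toZc (a - b))
    rw [Zc.norm_def] at this
    calc NN (a - b) ≤ max ‖(a - b).1‖ ‖(a - b).2‖ := this
    _ = max ‖a.1 - b.1‖ ‖a.2 - b.2‖ := rfl
    _ ≤ 1 * max ‖a.1 - b.1‖ ‖a.2 - b.2‖ := by norm_num
  have hAnti : AntilipschitzWith 3 toZc := by
    apply AntilipschitzWith.of_le_mul_dist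
    intro a b
    rw [dist_toZc, Prod.dist_eq, dist_eq_norm, dist_eq_norm]
    have h1 : ‖a.1 - b.1‖ ≤ 3 * NN (a - b) := by
      have := Zc.fst_norm_le (toZc (a - b))
      rw [Zc.norm_def] at this
      exact this
    have h2 : ‖a.2 - b.2‖ ≤ 3 * NN (a - b) := by
      have h := Zc.snd_norm_le (toZc (a - b))
      rw [Zc.norm_def] at h
      have h' : ‖a.2 - b.2‖ ≤ NN (a - b) := h
      have := NN_nonneg (a - b)
      linarith
    refine le_trans (max_le h1 h2) ?_
    norm_num
  have hcompl : IsComplete (Set.range toZc) :=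
    hAnti.isComplete_range hLip.uniformContinuous
  have hrange : Set.range toZc = (Set.univ : Set Zc) := by
    ext z; exact ⟨fun _ => trivial, fun _ => ⟨z, rfl⟩⟩
  rw [hrange] at hcompl
  exact completeSpace_iff_isComplete_univ.2 hcompl

/-! ## The diagonal subspace -/

def Wdiag : Submodule ℝ Zc where
  carrier := {z : Zc | (z : c0 × c0).1 = (z : c0 × c0).2}
  add_mem' := by
    intro a b ha hb
    show ((a + b : Zc) : c0 × c0).1 = ((a + b : Zc) : c0 × c0).2
    have : ((a + b : Zc) : c0 × c0) = ((a : c0 × c0) + (b : c0 × c0)) := rfl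
    exact congrArg₂ (· + ·) (show (a : c0 × c0).1 = (a : c0 × c0).2 from ha) (show (b : c0 × c0).1 = (b : c0 × c0).2 from hb)
  zero_mem' := rfl
  smul_mem' := by
    intro c z hz
    show ((c • z : Zc) : c0 × c0).1 = ((c • z : Zc) : c0 × c0).2
    have : ((c • z : Zc) : c0 × c0) = c • (z : c0 × c0) := rfl
    exact congrArg (c • ·) (show (z : c0 × c0).1 = (z : c0 × c0).2 from hz)

lemma mem_Wdiag {z : Zc} : z ∈ Wdiag ↔ (z : c0 × c0).1 = (z : c0 × c0).2 := Iff.rfl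

def gsub : Zc → c0 := fun z => (z : c0 × c0).1 - (z : c0 × c0).2

lemma gsub_continuous : Continuous gsub := by
  have : LipschitzWith 4 gsub := by
    apply LipschitzWith.of_dist_le_mul
    intro a b
    rw [dist_eq_norm, dist_eq_norm]
    have h1 : gsub a - gsub b = ((a - b : Zc) : c0 × c0).1 - ((a - b : Zc) : c0 × c0).2 := by
      show ((a : c0 × c0).1 - (a : c0 × c0).2) - ((b : c0 × c0).1 - (b : c0 × c0).2)
        = ((a : c0 × c0).1 - (b : c0 × c0).1) - ((a : c0 × c0).2 - (b : c0 × c0).2)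
      module
    rw [h1]
    have h2 := Zc.fst_norm_le (a - b)
    have h3 := Zc.snd_norm_le (a - b)
    have h4 := norm_nonneg (a - b)
    calc ‖((a - b : Zc) : c0 × c0).1 - ((a - b : Zc) : c0 × c0).2‖
        ≤ ‖((a - b : Zc) : c0 × c0).1‖ + ‖((a - b : Zc) : c0 × c0).2‖ := norm_sub_le _ _
    _ ≤ (4 : ℝ≥0) * ‖a - b‖ := by push_cast; linarith
  exact this.continuous

instance Wdiag_closed : IsClosed ((Wdiag : Set Zc)) := by
  have : (Wdiag : Set Zc) = gsub ⁻¹' {0} := by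
    ext z
    simp only [SetLike.mem_coe, mem_Wdiag, Set.mem_preimage, Set.mem_singleton_iff]
    unfold gsub
    rw [sub_eq_zero]
  rw [this]
  exact isClosed_singleton.preimage gsub_continuous

lemma NN_diag (x : c0) : NN ((x, x) : c0 × c0) = ‖x‖ := by
  have hM : MM ((x, x) : c0 × c0) = ‖x‖ := by
    unfold MM
    exact max_eq_right (norm_tl_le x)
  unfold NN
  rw [hM]
  refine max_eq_left ?_
  have := coord_le_norm x 0
  linarith

lemma NN_antidiag (x : c0) : NN ((x, -x) : c0 × c0) = ‖x‖ := by
  have hM : MM ((x, -x) : c0 × c0) = ‖x‖ := by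
    unfold MM
    rw [norm_neg]
    exact max_eq_right (norm_tl_le x)
  unfold NN
  rw [hM]
  refine max_eq_left ?_
  have := coord_le_norm x 0
  linarith

/-- `c0` is isometric to the diagonal. -/
def eW : c0 ≃ₗᵢ[ℝ] Wdiag where
  toLinearEquiv :=
    { toFun := fun x => ⟨toZc (x, x), rfl⟩
      map_add' := fun x y => rfl
      map_smul' := fun c x => rfl
      invFun := fun w => ((w : Zc) : c0 × c0).1
      left_inv := fun x => rfl
      right_inv := fun w => Subtype.ext (Prod.ext rfl w.2) }
  norm_map' := fun x => NN_diag x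

/-! ## The quotient -/

def antidiagL : c0 →ₗ[ℝ] Zc where
  toFun := fun x => toZc (x, -x)
  map_add' := fun x y => by
    show toZc (x + y, -(x + y)) = toZc (x, -x) + toZc (y, -y)
    unfold toZc
    show (x + y, -(x + y)) = ((x + y, -x + -y) : c0 × c0)
    congr 1
    abel
  map_smul' := fun c x => by
    show toZc (c • x, -(c • x)) = c • toZc (x, -x)
    unfold toZc
    show (c • x, -(c • x)) = ((c • x, c • -x) : c0 × c0)
    congr 1
    module

def L2 : c0 →ₗ[ℝ] (Zc ⧸ Wdiag) := Wdiag.mkQ.comp antidiagL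

lemma L2_apply (x : c0) : L2 x = Submodule.Quotient.mk (toZc (x, -x)) := rfl

lemma norm_L2 (x : c0) : ‖L2 x‖ = ‖x‖ := by
  refine le_antisymm ?_ ?_
  · rw [L2_apply]
    calc ‖(Submodule.Quotient.mk (toZc (x, -x)) : Zc ⧸ Wdiag)‖ ≤ ‖toZc (x, -x)‖ :=
        Submodule.Quotient.norm_mk_le _ _
    _ = ‖x‖ := NN_antidiag x
  · by_contra hcon
    push_neg at hcon
    obtain ⟨m, hm, hmlt⟩ := Submodule.Quotient.norm_mk_lt (L2 x) (sub_pos.2 hcon)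
    have hmx : ‖x‖ ≤ ‖m‖ := by
      -- m is in the coset of (x, -x); show coordinatewise |x n| ≤ NN m
      rw [L2_apply, Submodule.Quotient.eq] at hm
      have hrel : ((m : c0 × c0).1 - x) = ((m : c0 × c0).2 + x) := by
        have h := (mem_Wdiag.1 hm)
        have h1 : ((m - toZc (x, -x) : Zc) : c0 × c0).1 = (m : c0 × c0).1 - x := rfl
        have h2 : ((m - toZc (x, -x) : Zc) : c0 × c0).2 = (m : c0 × c0).2 - (-x) := rfl
        rw [h1, h2, sub_neg_eq_add] at h
        exact h
      set P : c0 × c0 := (m : c0 × c0) with hP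
      have hrel' : ∀ n, P.1 n - x n = P.2 n + x n := by
        intro n
        have := congrArg (fun y : c0 => y n) hrel
        simpa using this
      have h2n : ∀ n, |P.2 n| ≤ MM P := fun n =>
        le_trans (coord_le_norm _ _) (le_max_right _ _)
      have key : ∀ n, |x n| ≤ NN P := by
        intro n
        rcases eq_or_ne n 0 with rfl | hn
        · have hN : (|P.1 0| + MM P) / 2 ≤ NN P := le_max_right _ _
          have ha : |P.1 0 - P.2 0| ≤ |P.1 0| + |P.2 0| := abs_sub _ _
          have hb : P.1 0 - P.2 0 = 2 * x 0 := by have := hrel' 0; linarith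
          rw [hb] at ha
          have h20 := h2n 0
          have habs : |2 * x 0| = 2 * |x 0| := by rw [abs_mul]; norm_num
          rw [habs] at ha
          have hN' : (|P.1 0| + MM P) / 2 ≤ NN P := hN
          linarith
        · have h1n : |P.1 n| ≤ MM P := by
            have htl : tl P.1 n = P.1 n := by
              rw [tl_apply, if_neg hn, mul_zero, sub_zero]
            have := coord_le_norm (tl P.1) n
            rw [htl] at this
            exact le_trans this (le_max_left _ _)
          have hb : P.1 n - P.2 n = 2 * x n := by have := hrel' n; linarith
          have ha : |P.1 n - P.2 n| ≤ |P.1 n| + |P.2 n| := abs_sub _ _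
          rw [hb] at ha
          have h2 := h2n n
          have hMN := MM_le_NN P
          have habs : |2 * x n| = 2 * |x n| := by
            rw [abs_mul]; norm_num
          rw [habs] at ha
          linarith
      have : ‖x‖ ≤ NN P := (norm_le_iff x (NN_nonneg P)).2 key
      exact this
    have : ‖L2 x‖ + (‖x‖ - ‖L2 x‖) = ‖x‖ := by ring
    rw [this] at hmlt
    linarith

def eQ : c0 ≃ₗᵢ[ℝ] (Zc ⧸ Wdiag) where
  toLinearEquiv := LinearEquiv.ofBijective L2 (by
    constructor
    · intro x y h
      have h0 : L2 (x - y) = 0 := by rw [map_sub, h, sub_self]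
      have h1 : ‖x - y‖ = 0 := by rw [← norm_L2, h0, norm_zero]
      exact sub_eq_zero.1 (norm_eq_zero.1 h1)
    · intro q
      obtain ⟨z, rfl⟩ := Submodule.Quotient.mk_surjective Wdiag q
      refine ⟨(2⁻¹ : ℝ) • ((z : c0 × c0).1 - (z : c0 × c0).2), ?_⟩
      rw [L2_apply, Submodule.Quotient.eq]
      rw [mem_Wdiag]
      show (2⁻¹ : ℝ) • ((z : c0 × c0).1 - (z : c0 × c0).2) - (z : c0 × c0).1
        = -((2⁻¹ : ℝ) • ((z : c0 × c0).1 - (z : c0 × c0).2)) - (z : c0 × c0).2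
      module)
  norm_map' := norm_L2

/-! ## The slice functional on Zc -/

def fZ : Zc →L[ℝ] ℝ :=
  LinearMap.mkContinuous
    { toFun := fun z => (z : c0 × c0).1 0 / 2
      map_add' := fun a b => by
        show ((a : c0 × c0).1 + (b : c0 × c0).1) 0 / 2 = _
        simp
        ring
      map_smul' := fun c a => by
        show (c • (a : c0 × c0).1) 0 / 2 = _
        simp
        ring }
    1
    (fun z => by
      have := Zc.coord0_le z
      simp only [LinearMap.coe_mk, AddHom.coe_mk, Real.norm_eq_abs, one_mul]
      rw [abs_div]
      simp only [abs_two]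
      linarith)

lemma fZ_apply (z : Zc) : fZ z = (z : c0 × c0).1 0 / 2 := rfl

def z0 : Zc := toZc ((2:ℝ) • ee 0, 0)

lemma norm_z0 : ‖z0‖ = 1 := by
  rw [Zc.norm_def]
  have htl : tl ((2:ℝ) • ee 0) = 0 := by
    ext m
    rw [tl_apply]
    rcases eq_or_ne m 0 with rfl | h
    · simp
    · simp [h]
  have hM : MM ((z0 : c0 × c0)) = 0 := by
    show max ‖tl ((2:ℝ) • ee 0)‖ ‖(0 : c0)‖ = 0
    rw [htl]
    simp
  show NN (z0 : c0 × c0) = 1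
  unfold NN
  rw [hM]
  have h0 : |(z0 : c0 × c0).1 0| = 2 := by
    show |((2:ℝ) • ee 0) 0| = 2
    simp
  rw [h0]
  norm_num

lemma fZ_z0 : fZ z0 = 1 := by
  rw [fZ_apply]
  show ((2:ℝ) • ee 0) 0 / 2 = 1
  simp

lemma fZ_ne : fZ ≠ 0 := by
  intro h
  have := fZ_z0
  rw [h] at this
  simp at this

lemma ssup_fZ : sSup (fZ '' closedBall (0 : Zc) 1) = 1 := by
  have hub : ∀ y ∈ fZ '' closedBall (0 : Zc) 1, y ≤ 1 := by
    rintro y ⟨z, hz, rfl⟩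
    rw [mem_closedBall_zero_iff] at hz
    rw [fZ_apply]
    have h1 := Zc.coord0_le z
    have h2 := le_abs_self ((z : c0 × c0).1 0)
    linarith
  have hmem : (1 : ℝ) ∈ fZ '' closedBall (0 : Zc) 1 :=
    ⟨z0, by rw [mem_closedBall_zero_iff, norm_z0], fZ_z0⟩
  exact le_antisymm (csSup_le ⟨1, hmem⟩ hub) (le_csSup ⟨1, hub⟩ hmem)

lemma MM_sub_le (z w : c0 × c0) : MM (z - w) ≤ MM z + MM w := by
  have h : z - w = z + (-1 : ℝ) • w := by module
  rw [h]
  calc MM (z + (-1:ℝ) • w) ≤ MM z + MM ((-1:ℝ) • w) := MM_add_le _ _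
  _ = MM z + MM w := by rw [MM_smul]; norm_num

/-! ## Small slices in Zc -/

lemma z0_mem_slice {α : ℝ} (hα : 0 < α) : z0 ∈ Slice (closedBall (0 : Zc) 1) fZ α := by
  refine ⟨?_, ?_⟩
  · rw [mem_closedBall_zero_iff, norm_z0]
  · rw [ssup_fZ, fZ_z0]
    linarith

lemma slice_fact {α : ℝ} (hα : 0 < α) (y : Zc) (h1 : ‖y‖ ≤ 1) (h2 : 1 - α < fZ y) :
    2 - 2 * α < (y : c0 × c0).1 0 ∧ (y : c0 × c0).1 0 ≤ 2 ∧ MM (y : c0 × c0) < 2 * α := by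
  have ha : (|(y : c0 × c0).1 0| + MM (y : c0 × c0)) / 2 ≤ ‖y‖ := le_max_right _ _
  have hfz : fZ y = (y : c0 × c0).1 0 / 2 := rfl
  have h0 : 2 - 2 * α < (y : c0 × c0).1 0 := by
    rw [hfz] at h2
    linarith
  have habs : (y : c0 × c0).1 0 ≤ |(y : c0 × c0).1 0| := le_abs_self _
  have hMn := MM_nonneg (y : c0 × c0)
  refine ⟨h0, by linarith, by linarith⟩

lemma slice_diam {α : ℝ} (hα : 0 < α) :
    Metric.diam (Slice (closedBall (0 : Zc) 1) fZ α) ≤ 4 * α := by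
  refine Metric.diam_le_of_forall_dist_le (by linarith) ?_
  intro z hz z' hz'
  obtain ⟨hz1, hz2⟩ := hz
  obtain ⟨hz1', hz2'⟩ := hz'
  rw [ssup_fZ] at hz2 hz2'
  rw [mem_closedBall_zero_iff] at hz1 hz1'
  obtain ⟨ha1, ha2, ha3⟩ := slice_fact hα z hz1 hz2
  obtain ⟨hb1, hb2, hb3⟩ := slice_fact hα z' hz1' hz2'
  rw [dist_eq_norm, Zc.norm_def]
  have hsub : ((z - z' : Zc) : c0 × c0) = (z : c0 × c0) - (z' : c0 × c0) := rfl
  have hMM : MM ((z - z' : Zc) : c0 × c0) ≤ MM (z : c0 × c0) + MM (z' : c0 × c0) := by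
    rw [hsub]; exact MM_sub_le _ _
  have h0 : ((z - z' : Zc) : c0 × c0).1 0 = (z : c0 × c0).1 0 - (z' : c0 × c0).1 0 := rfl
  have hdiff : |((z - z' : Zc) : c0 × c0).1 0| ≤ 2 * α := by
    rw [h0]
    rw [abs_le]
    constructor <;> linarith
  unfold NN
  refine max_le (by linarith) ?_
  linarith

end AuxiliaryConstruction

/-- the diameter two properties are not three-space properties: there are a
Banach space `Z` and a closed subspace `W` such that `W` and `Z/W` have the SD2P but the unit
ball of `Z` has slices of arbitrarily small diameter (so `Z` fails the slice-D2P). -/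
theorem statement12 :
    ∃ (Z : Type) (_ : NormedAddCommGroup Z) (_ : NormedSpace ℝ Z) (_ : CompleteSpace Z)
      (W : Subspace ℝ Z) (_ : IsClosed (W : Set Z)),
      SD2P W ∧ SD2P (Z ⧸ W) ∧
      ∀ ε > (0 : ℝ), ∃ (f : Z →L[ℝ] ℝ) (α : ℝ), f ≠ 0 ∧ 0 < α ∧
        (Slice (closedBall (0 : Z) 1) f α).Nonempty ∧
        Metric.diam (Slice (closedBall (0 : Z) 1) f α) < ε := by
  refine ⟨Zc, inferInstance, inferInstance, inferInstance, Wdiag, Wdiag_closed,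
    sd2p_transfer eW sd2p_c0, sd2p_transfer eQ sd2p_c0, ?_⟩
  intro ε hε
  have hα : (0 : ℝ) < ε / 5 := by linarith
  refine ⟨fZ, ε / 5, fZ_ne, hα, ⟨z0, z0_mem_slice hα⟩, ?_⟩
  calc Metric.diam (Slice (closedBall (0 : Zc) 1) fZ (ε / 5)) ≤ 4 * (ε / 5) :=
      slice_diam hα
  _ < ε := by linarith
end

section
/- Let X be a Banach space whose dual X* has the weak-star slice diameter two property, let W be a weak-star closed subspace of X* that is the range of a norm-one weak-star–continuous projection P on X* whose kernel is finite-dimensional. Then W has the weak-star slice diameter two property (slices taken with respect to the predual elements). -/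
open Metric Set

set_option maxHeartbeats 1000000

open Metric Set NormedSpace Filter Topology

section AuxStatement18
variable {X : Type*} [NormedAddCommGroup X] [NormedSpace ℝ X]

/-- A weak-star continuous linear functional on the dual is an evaluation. -/
lemma wstar_functional_eval18 (φ : StrongDual ℝ X →ₗ[ℝ] ℝ)
    (hφ : Continuous fun f : WeakDual ℝ X => φ f) :
    ∃ y : X, ∀ f : StrongDual ℝ X, φ f = f y := by
  have hball : (fun f : WeakDual ℝ X => φ f) ⁻¹' (ball 0 1) ∈ 𝓝 (0 : WeakDual ℝ X) := by
    apply hφ.continuousAt.preimage_mem_nhds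
    have : φ (0 : WeakDual ℝ X) = 0 := map_zero φ
    rw [this]
    exact ball_mem_nhds _ one_pos
  have hemb := WeakBilin.isEmbedding (B := topDualPairing ℝ X) ContinuousLinearMap.coe_injective
  erw [hemb.toIsInducing.nhds_eq_comap] at hball
  replace hball := Filter.mem_comap.mp hball
  obtain ⟨T, hT, hTsub⟩ := hball
  rw [nhds_pi, Filter.mem_pi] at hT
  obtain ⟨I, hIfin, t, ht, hpi⟩ := hT
  have key : ∀ f : StrongDual ℝ X, (∀ y ∈ I, f y = 0) → φ f = 0 := by
    intro f hf
    by_contra hne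
    obtain ⟨c, hc⟩ : ∃ c : ℝ, 1 < |c * φ f| := ⟨2 / φ f, by
      rw [div_mul_cancel₀ 2 hne]; norm_num⟩
    have hmem : (fun y => (topDualPairing ℝ X) (c • f) y) ∈ T := by
      apply hpi
      intro y hy
      show (topDualPairing ℝ X) (c • f) y ∈ t y
      have h1 : (topDualPairing ℝ X) (c • f) y = 0 := by
        rw [topDualPairing_apply]
        simp [hf y hy]
      rw [h1]
      exact mem_of_mem_nhds (ht y)
    have := hTsub hmem
    replace this : φ (c • f) ∈ ball (0 : ℝ) 1 := this
    rw [mem_ball, dist_zero_right] at this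
    rw [map_smul, smul_eq_mul, Real.norm_eq_abs] at this
    linarith [hc]
  haveI : Finite ↥I := hIfin.to_subtype
  haveI : Fintype ↥I := Fintype.ofFinite _
  set L : ↥I → (StrongDual ℝ X →ₗ[ℝ] ℝ) :=
    fun y => (NormedSpace.inclusionInDoubleDual ℝ X (y : X)).toLinearMap with hL
  have hker : ⨅ i, LinearMap.ker (L i) ≤ LinearMap.ker φ := by
    intro f hf
    simp only [Submodule.mem_iInf, LinearMap.mem_ker] at hf ⊢
    apply key
    intro y hy
    have := hf ⟨y, hy⟩
    simpa [hL, NormedSpace.dual_def] using this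
  have hspan := mem_span_of_iInf_ker_le_ker hker
  rw [Submodule.mem_span_range_iff_exists_fun] at hspan
  obtain ⟨cf, hcf⟩ := hspan
  refine ⟨∑ i, cf i • (i : X), fun f => ?_⟩
  have := congrArg (fun ψ : StrongDual ℝ X →ₗ[ℝ] ℝ => ψ f) hcf
  simp only [LinearMap.coe_sum, Finset.sum_apply, LinearMap.smul_apply] at this
  rw [← this]
  rw [map_sum]
  congr 1
  ext i
  simp [hL, NormedSpace.dual_def, smul_eq_mul, mul_comm]

/-- Decomposition of the complementary projection via evaluations. -/
lemma kernel_decomp18 (P : StrongDual ℝ X →L[ℝ] StrongDual ℝ X) (hproj : ∀ f, P (P f) = P f)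
    (hwcont : @Continuous (WeakDual ℝ X) (WeakDual ℝ X) _ _ P)
    (hker : FiniteDimensional ℝ (LinearMap.ker P.toLinearMap)) :
    ∃ (n : ℕ) (yv : Fin n → X) (kv : Fin n → StrongDual ℝ X),
      (∀ f : StrongDual ℝ X, f - P f = ∑ i, f (yv i) • kv i) ∧
      (∀ f : StrongDual ℝ X, f - P f = 0 → ∀ i, f (yv i) = 0) := by
  classical
  set V : Submodule ℝ (StrongDual ℝ X) := LinearMap.ker P.toLinearMap with hV
  let Vw : Submodule ℝ (WeakDual ℝ X) :=
    { carrier := (V : Set (StrongDual ℝ X))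
      add_mem' := fun ha hb => V.add_mem ha hb
      zero_mem' := V.zero_mem
      smul_mem' := fun c _ h => V.smul_mem c h }
  haveI hfdw : FiniteDimensional ℝ ↥Vw := hker
  let Pw : WeakDual ℝ X → WeakDual ℝ X := fun f => P f
  let Qw : WeakDual ℝ X → WeakDual ℝ X := fun f => f - Pw f
  have key : ∀ g : StrongDual ℝ X, g - P g ∈ V := by
    intro g
    rw [hV, LinearMap.mem_ker, map_sub, ContinuousLinearMap.coe_coe, hproj, sub_self]
  have hmem : ∀ f : WeakDual ℝ X, Qw f ∈ Vw := fun f => key f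
  have hcont : Continuous (fun f : WeakDual ℝ X => (⟨Qw f, hmem f⟩ : ↥Vw)) := by
    apply Continuous.subtype_mk
    exact continuous_id.sub hwcont
  haveI : Module.Free ℝ ↥V := Module.Free.of_divisionRing ℝ ↥V
  let b := Module.finBasis ℝ ↥V
  have hco : ∀ i, Continuous fun v : ↥Vw => b.coord i ⟨v.1, v.2⟩ := by
    intro i
    let ℓ : ↥Vw →ₗ[ℝ] ℝ :=
      { toFun := fun v => b.coord i ⟨v.1, v.2⟩
        map_add' := fun v w => by exact map_add (b.coord i) ⟨v.1, v.2⟩ ⟨w.1, w.2⟩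
        map_smul' := fun c v => by exact map_smul (b.coord i) c ⟨v.1, v.2⟩ }
    exact ℓ.continuous_of_finiteDimensional
  let c : Fin (Module.finrank ℝ ↥V) → (StrongDual ℝ X →ₗ[ℝ] ℝ) := fun i =>
    { toFun := fun g => b.coord i ⟨g - P g, key g⟩
      map_add' := fun g h => by
        have h1 : (⟨g + h - P (g + h), key _⟩ : ↥V)
            = ⟨g - P g, key g⟩ + ⟨h - P h, key h⟩ := by
          apply Subtype.ext
          show g + h - P (g + h) = (g - P g) + (h - P h)
          rw [map_add]; abel
        show (b.coord i) ⟨g + h - P (g + h), key _⟩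
            = (b.coord i) ⟨g - P g, key g⟩ + (b.coord i) ⟨h - P h, key h⟩
        rw [h1, map_add]
      map_smul' := fun a g => by
        have h1 : (⟨a • g - P (a • g), key _⟩ : ↥V) = a • (⟨g - P g, key g⟩ : ↥V) := by
          apply Subtype.ext
          show a • g - P (a • g) = a • (g - P g)
          rw [map_smul, smul_sub]
        show (b.coord i) ⟨a • g - P (a • g), key _⟩ = (RingHom.id ℝ) a • (b.coord i) ⟨g - P g, key g⟩
        rw [h1, map_smul]; rfl
      }
  have hceval : ∀ i, ∃ y : X, ∀ f : StrongDual ℝ X, c i f = f y := by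
    intro i
    apply wstar_functional_eval18
    exact (hco i).comp hcont
  choose yv hyv using hceval
  refine ⟨Module.finrank ℝ ↥V, yv, fun i => ((b i : ↥V) : StrongDual ℝ X), ?_, ?_⟩
  · intro f
    have hsum := b.sum_repr ⟨f - P f, key f⟩
    have := congrArg (fun v : ↥V => (v : StrongDual ℝ X)) hsum
    simp only [Submodule.coe_sum, SetLike.val_smul] at this
    rw [← this]
    congr 1
    ext i
    rw [← hyv i f]
    simp only [c, LinearMap.coe_mk, AddHom.coe_mk, Module.Basis.coord_apply]
  · intro f hf i
    rw [← hyv i f]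
    have : (⟨f - P f, key f⟩ : ↥V) = 0 := Subtype.ext (by simpa using hf)
    show b.coord i ⟨f - P f, key f⟩ = 0
    rw [this, map_zero]

/-- sSup of evaluations over the dual ball is the norm. -/
lemma sSup_dual_ball18 [CompleteSpace X] (v : X) (hv : v ≠ 0) :
    sSup ((fun g : StrongDual ℝ X => g v) '' closedBall 0 1) = ‖v‖ := by
  obtain ⟨f, hf1, hfv⟩ := exists_dual_vector ℝ v (norm_ne_zero_iff.mpr hv)
  apply le_antisymm
  · apply csSup_le
    · exact ⟨f v, f, by simp [mem_closedBall_zero_iff, hf1], rfl⟩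
    · rintro a ⟨g, hg, rfl⟩
      rw [mem_closedBall_zero_iff] at hg
      calc g v ≤ |g v| := le_abs_self _
        _ ≤ ‖g‖ * ‖v‖ := g.le_opNorm v
        _ ≤ 1 * ‖v‖ := by gcongr
        _ = ‖v‖ := one_mul _
  · apply le_csSup
    · refine ⟨‖v‖, ?_⟩
      rintro a ⟨g, hg, rfl⟩
      rw [mem_closedBall_zero_iff] at hg
      calc g v ≤ |g v| := le_abs_self _
        _ ≤ ‖g‖ * ‖v‖ := g.le_opNorm v
        _ ≤ 1 * ‖v‖ := by gcongr
        _ = ‖v‖ := one_mul _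
    · exact ⟨f, by simp [mem_closedBall_zero_iff, hf1], hfv⟩

end AuxStatement18

/-- weak-star version of Statement 3: if `X*` has the weak-star slice diameter
two property and `W` is a weak-star closed subspace of `X*` which is the range of a norm-one
weak-star continuous projection `P` on `X*` with finite-dimensional kernel, then `W` has the
weak-star slice diameter two property (slices given by predual elements). -/
theorem statement18 {X : Type*} [NormedAddCommGroup X] [NormedSpace ℝ X] [CompleteSpace X]
    (hX : ∀ x : X, x ≠ 0 → ∀ α > (0 : ℝ),
      Metric.diam {f ∈ closedBall (0 : StrongDual ℝ X) 1 |
        sSup ((fun g : StrongDual ℝ X => g x) '' closedBall 0 1) - α < f x} = 2)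
    (W : Subspace ℝ (StrongDual ℝ X))
    (hWclosed : @IsClosed (WeakDual ℝ X) _ (W : Set (StrongDual ℝ X)))
    (P : StrongDual ℝ X →L[ℝ] StrongDual ℝ X)
    (hrange : Set.range P = (W : Set (StrongDual ℝ X)))
    (hproj : ∀ f, P (P f) = P f) (hnorm : ‖P‖ = 1)
    (hwcont : @Continuous (WeakDual ℝ X) (WeakDual ℝ X) _ _ P)
    (hker : FiniteDimensional ℝ (LinearMap.ker P.toLinearMap)) :
    ∀ x : X, x ≠ 0 → ∀ α > (0 : ℝ),
      Metric.diam {g ∈ closedBall (0 : W) 1 |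
        sSup ((fun g : W => (g : StrongDual ℝ X) x) '' closedBall 0 1) - α
          < (g : StrongDual ℝ X) x} = 2 := by
  classical
  intro x hx α hα
  -- basic facts about P and W
  have hPmem : ∀ f : StrongDual ℝ X, P f ∈ W := by
    intro f
    have : P f ∈ Set.range P := Set.mem_range_self f
    rwa [hrange] at this
  have hPg : ∀ g : StrongDual ℝ X, g ∈ W → P g = g := by
    intro g hg
    have hg' : g ∈ Set.range ⇑P := by rw [hrange]; exact hg
    obtain ⟨f, rfl⟩ := hg'
    exact hproj f
  have hPnorm : ∀ f : StrongDual ℝ X, ‖P f‖ ≤ ‖f‖ := by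
    intro f
    calc ‖P f‖ ≤ ‖P‖ * ‖f‖ := P.le_opNorm f
      _ = ‖f‖ := by rw [hnorm, one_mul]
  -- the predual point x' representing f ↦ (P f) x
  obtain ⟨x', hx'⟩ : ∃ x' : X, ∀ f : StrongDual ℝ X, P f x = f x' := by
    apply wstar_functional_eval18
      (φ := { toFun := fun f : StrongDual ℝ X => P f x
              map_add' := fun f g => by
                show P (f + g) x = P f x + P g x
                rw [map_add]; rfl
              map_smul' := fun a f => by
                show P (a • f) x = (RingHom.id ℝ) a • P f x
                rw [map_smul]; rfl })
    exact (WeakBilin.eval_continuous (topDualPairing ℝ X) x).comp hwcont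
  -- for g ∈ W, g x = g x'
  have hgx : ∀ g : StrongDual ℝ X, g ∈ W → g x = g x' := by
    intro g hg
    rw [← hx' g, hPg g hg]
  -- decomposition of I - P
  obtain ⟨n, yv, kv, hQ, hQ0⟩ := kernel_decomp18 P hproj hwcont hker
  have hyW : ∀ (g : StrongDual ℝ X), g ∈ W → ∀ i, g (yv i) = 0 := by
    intro g hg i
    exact hQ0 g (by rw [hPg g hg, sub_self]) i
  -- set and sSup notation
  set SW : Set ↥W := {g ∈ closedBall (0 : ↥W) 1 |
      sSup ((fun g : ↥W => (g : StrongDual ℝ X) x) '' closedBall 0 1) - α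
        < (g : StrongDual ℝ X) x} with hSW
  set sW : ℝ := sSup ((fun g : ↥W => (g : StrongDual ℝ X) x) '' closedBall 0 1) with hsWdef
  -- upper bounds on the image set
  have himub : ∀ a ∈ (fun g : ↥W => (g : StrongDual ℝ X) x) '' closedBall 0 1, a ≤ ‖x'‖ := by
    rintro a ⟨g, hg, rfl⟩
    rw [mem_closedBall_zero_iff (E := ↥W)] at hg
    have hgW : (g : StrongDual ℝ X) ∈ W := g.2
    show (g : StrongDual ℝ X) x ≤ ‖x'‖
    rw [hgx g hgW]
    calc (g : StrongDual ℝ X) x' ≤ |(g : StrongDual ℝ X) x'| := le_abs_self _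
      _ ≤ ‖(g : StrongDual ℝ X)‖ * ‖x'‖ := (g : StrongDual ℝ X).le_opNorm x'
      _ ≤ 1 * ‖x'‖ := by
          apply mul_le_mul_of_nonneg_right _ (norm_nonneg _)
          rwa [← Submodule.coe_norm]
      _ = ‖x'‖ := one_mul _
  have himbdd : BddAbove ((fun g : ↥W => (g : StrongDual ℝ X) x) '' closedBall 0 1) := ⟨‖x'‖, himub⟩
  have himne : ((fun g : ↥W => (g : StrongDual ℝ X) x) '' closedBall 0 1).Nonempty :=
    ⟨((0 : ↥W) : StrongDual ℝ X) x, ⟨0, mem_closedBall_self zero_le_one, rfl⟩⟩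
  -- diam SW ≤ 2 always
  have hSWsub : SW ⊆ closedBall (0 : ↥W) 1 := fun g hg => hg.1
  have hdiamle : Metric.diam SW ≤ 2 := by
    calc Metric.diam SW ≤ Metric.diam (closedBall (0 : ↥W) 1) :=
          Metric.diam_mono hSWsub Metric.isBounded_closedBall
      _ ≤ 2 * 1 := Metric.diam_closedBall zero_le_one
      _ = 2 := by norm_num
  by_cases hx'0 : x' = 0
  · -- degenerate case: the slice is the whole ball of W
    have hzero : ∀ g : ↥W, (g : StrongDual ℝ X) x = 0 := by
      intro g
      rw [hgx _ g.2, hx'0, map_zero]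
    have hsz : sW = 0 := by
      rw [hsWdef]
      apply le_antisymm
      · apply csSup_le himne
        rintro a ⟨g, hg, rfl⟩
        show (g : StrongDual ℝ X) x ≤ 0
        rw [hzero g]
      · apply le_csSup himbdd
        exact ⟨0, mem_closedBall_self zero_le_one, hzero 0⟩
    have hset : SW = closedBall (0 : ↥W) 1 := by
      rw [hSW]
      ext g
      constructor
      · exact fun h => h.1
      · intro h
        refine ⟨h, ?_⟩
        rw [hzero g, hsz]
        linarith
    rw [hset]
    apply le_antisymm
    · calc Metric.diam (closedBall (0 : ↥W) 1) ≤ 2 * 1 := Metric.diam_closedBall zero_le_one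
        _ = 2 := by norm_num
    · apply le_of_forall_pos_le_add
      intro ε hε
      set ε' : ℝ := min ε 2 with hε'def
      have hε'pos : 0 < ε' := lt_min hε two_pos
      have hε'le : ε' ≤ ε := min_le_left _ _
      have hexf : ∃ f : StrongDual ℝ X, (1 - ε' / 4) * ‖f‖ < ‖P f‖ := by
        by_contra hcon
        push_neg at hcon
        have h1 : ‖P‖ ≤ 1 - ε' / 4 := by
          apply P.opNorm_le_bound _ hcon
          have : ε' ≤ 2 := min_le_right _ _
          linarith
        rw [hnorm] at h1
        linarith
      obtain ⟨f, hf⟩ := hexf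
      have hf0 : f ≠ 0 := by
        intro h
        rw [h] at hf
        simp only [norm_zero, mul_zero, map_zero] at hf
        exact lt_irrefl 0 hf
      have hfpos : 0 < ‖f‖ := norm_pos_iff.mpr hf0
      set u : StrongDual ℝ X := P (‖f‖⁻¹ • f) with hu
      have hunorm : ‖u‖ ≤ 1 := by
        calc ‖u‖ ≤ ‖(‖f‖⁻¹ • f)‖ := hPnorm _
          _ = ‖f‖⁻¹ * ‖f‖ := by rw [norm_smul, norm_inv, norm_norm]
          _ = 1 := inv_mul_cancel₀ (ne_of_gt hfpos)
      have hubig : 1 - ε' / 4 < ‖u‖ := by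
        have : u = ‖f‖⁻¹ • P f := by rw [hu, map_smul]
        rw [this, norm_smul, norm_inv, norm_norm]
        rw [show (1 : ℝ) - ε' / 4 = ‖f‖⁻¹ * ((1 - ε' / 4) * ‖f‖) by
          field_simp]
        exact mul_lt_mul_of_pos_left hf (inv_pos.mpr hfpos)
      set w₁ : ↥W := ⟨u, hPmem _⟩ with hw₁
      have hw₁mem : w₁ ∈ closedBall (0 : ↥W) 1 := by
        rw [mem_closedBall_zero_iff (E := ↥W)]
        exact hunorm
      have hw₂mem : -w₁ ∈ closedBall (0 : ↥W) 1 := by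
        rw [mem_closedBall_zero_iff (E := ↥W), norm_neg (E := ↥W)]
        exact hunorm
      have hdist : dist w₁ (-w₁) = ‖u + u‖ := by
        rw [dist_eq_norm (E := ↥W)]; show ‖u - -u‖ = _; rw [sub_neg_eq_add]
      have huu : ‖u + u‖ = 2 * ‖u‖ := by
        rw [show u + u = (2 : ℝ) • u by rw [two_smul], norm_smul]
        norm_num
      have hd := Metric.dist_le_diam_of_mem Metric.isBounded_closedBall hw₁mem hw₂mem
      rw [hdist, huu] at hd
      linarith
  · -- main case : x' ≠ 0
    have hx'pos : 0 < ‖x'‖ := norm_pos_iff.mpr hx'0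
    obtain ⟨fh, hfh1, hfhx⟩ := exists_dual_vector ℝ x' (norm_ne_zero_iff.mpr hx'0)
    have hu0W : P fh ∈ W := hPmem fh
    have hu0x : P fh x = ‖x'‖ := by rw [hx' fh, hfhx]; norm_num
    have hu0norm : ‖P fh‖ ≤ 1 := by
      calc ‖P fh‖ ≤ ‖fh‖ := hPnorm fh
        _ = 1 := hfh1
    have hsWval : sW = ‖x'‖ := by
      rw [hsWdef]
      apply le_antisymm (csSup_le himne himub)
      apply le_csSup himbdd
      refine ⟨⟨P fh, hu0W⟩, ?_, hu0x⟩
      rw [mem_closedBall_zero_iff (E := ↥W)]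
      exact hu0norm
    refine le_antisymm hdiamle ?_
    apply le_of_forall_pos_le_add
    intro ε hε
    set ε₁ : ℝ := min ε 1 with hε₁def
    have hε₁pos : 0 < ε₁ := lt_min hε one_pos
    have hε₁le1 : ε₁ ≤ 1 := min_le_right _ _
    have hε₁leε : ε₁ ≤ ε := min_le_left _ _
    -- constants
    set CK : ℝ := ∑ i, ‖kv i‖ with hCKdef
    set CY : ℝ := ∑ i, ‖yv i‖ with hCYdef
    have hCK0 : 0 ≤ CK := Finset.sum_nonneg fun i _ => norm_nonneg _
    have hCY0 : 0 ≤ CY := Finset.sum_nonneg fun i _ => norm_nonneg _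
    set c : ℝ := ε₁ / (16 * (CK + 1)) with hcdef
    have hcpos : 0 < c := by
      apply div_pos hε₁pos
      nlinarith
    set r : ℝ := α / (4 * (CY + 1)) with hrdef
    have hrpos : 0 < r := by
      apply div_pos hα
      nlinarith
    -- the auxiliary convex function
    set H : (Fin n → ℝ) → ℝ := fun t => ‖x' + ∑ i, t i • yv i‖ with hHdef
    have hlip : LipschitzWith (CY + 1).toNNReal H := by
      apply LipschitzWith.of_dist_le_mul
      intro t t'
      rw [Real.dist_eq]
      have h1 : |H t - H t'| ≤ ‖(x' + ∑ i, t i • yv i) - (x' + ∑ i, t' i • yv i)‖ :=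
        abs_norm_sub_norm_le _ _
      have h2 : (x' + ∑ i, t i • yv i) - (x' + ∑ i, t' i • yv i)
          = ∑ i, (t i - t' i) • yv i := by
        rw [Finset.sum_congr rfl fun i _ => sub_smul (t i) (t' i) (yv i),
          Finset.sum_sub_distrib]
        abel
      have h3 : ‖∑ i, (t i - t' i) • yv i‖ ≤ dist t t' * CY := by
        calc ‖∑ i, (t i - t' i) • yv i‖ ≤ ∑ i, ‖(t i - t' i) • yv i‖ := norm_sum_le _ _
          _ = ∑ i, |t i - t' i| * ‖yv i‖ := by
              refine Finset.sum_congr rfl fun i _ => ?_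
              rw [norm_smul, Real.norm_eq_abs]
          _ ≤ ∑ i, dist t t' * ‖yv i‖ := by
              refine Finset.sum_le_sum fun i _ => ?_
              apply mul_le_mul_of_nonneg_right _ (norm_nonneg _)
              rw [← Real.dist_eq]
              exact dist_le_pi_dist t t' i
          _ = dist t t' * CY := by rw [← Finset.mul_sum]
      calc |H t - H t'| ≤ dist t t' * CY := h1.trans (h2 ▸ h3)
        _ ≤ ((CY + 1).toNNReal : ℝ) * dist t t' := by
            rw [Real.coe_toNNReal _ (by linarith), mul_comm]
            have := dist_nonneg (x := t) (y := t')
            nlinarith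
    -- a point of differentiability near the origin
    obtain ⟨t0, ht0r, ht0d⟩ : ∃ t0 ∈ ball (0 : Fin n → ℝ) r, DifferentiableAt ℝ H t0 := by
      have hae := hlip.ae_differentiableAt (μ := (MeasureTheory.volume : MeasureTheory.Measure (Fin n → ℝ)))
      rw [MeasureTheory.ae_iff] at hae
      by_contra hcon
      push_neg at hcon
      have hsub : ball (0 : Fin n → ℝ) r ⊆ {t | ¬DifferentiableAt ℝ H t} :=
        fun t ht => hcon t ht
      exact (measure_ball_pos MeasureTheory.volume 0 hrpos).ne'
        (MeasureTheory.measure_mono_null hsub hae)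
    -- the slicing functional v
    set v : X := x' + ∑ i, t0 i • yv i with hvdef
    set ρ : ℝ := ‖∑ i, t0 i • yv i‖ with hρdef
    have hρ : ρ ≤ α / 4 := by
      have h1 : ρ ≤ r * CY := by
        rw [hρdef]
        calc ‖∑ i, t0 i • yv i‖ ≤ ∑ i, ‖t0 i • yv i‖ := norm_sum_le _ _
          _ = ∑ i, |t0 i| * ‖yv i‖ := by
              refine Finset.sum_congr rfl fun i _ => ?_
              rw [norm_smul, Real.norm_eq_abs]
          _ ≤ ∑ i, r * ‖yv i‖ := by
              refine Finset.sum_le_sum fun i _ => ?_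
              apply mul_le_mul_of_nonneg_right _ (norm_nonneg _)
              have h2 : |t0 i| ≤ ‖t0‖ := norm_le_pi_norm t0 i
              have h3 : ‖t0‖ < r := by rwa [mem_ball_zero_iff] at ht0r
              linarith
          _ = r * CY := by rw [← Finset.mul_sum]
      have h4 : r * CY ≤ α / 4 := by
        rw [hrdef]
        rw [div_mul_eq_mul_div, div_le_div_iff₀ (by nlinarith) (by norm_num)]
        nlinarith
      linarith
    have hu0v : P fh v = ‖x'‖ := by
      have h1 : P fh v = P fh x' + ∑ i, t0 i * P fh (yv i) := by
        rw [hvdef, map_add, map_sum]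
        simp [smul_eq_mul]
      have h2 : ∀ i, P fh (yv i) = 0 := fun i => hyW (P fh) hu0W i
      have h3 : P fh x' = ‖x'‖ := by
        rw [← hgx (P fh) hu0W, hu0x]
      rw [h1, h3]
      simp [h2]
    have hvx : ‖x'‖ ≤ ‖v‖ := by
      calc ‖x'‖ = P fh v := hu0v.symm
        _ ≤ |P fh v| := le_abs_self _
        _ ≤ ‖P fh‖ * ‖v‖ := (P fh).le_opNorm v
        _ ≤ 1 * ‖v‖ := mul_le_mul_of_nonneg_right hu0norm (norm_nonneg _)
        _ = ‖v‖ := one_mul _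
    have hv0 : v ≠ 0 := by
      intro h
      rw [h, norm_zero] at hvx
      linarith
    have hHt0 : H t0 = ‖v‖ := rfl
    -- second difference estimate from differentiability
    obtain ⟨s, hspos, hΔ⟩ : ∃ s : ℝ, 0 < s ∧ ∀ h : Fin n → ℝ, ‖h‖ ≤ s →
        H (t0 + h) + H (t0 - h) - 2 * H t0 ≤ c * s := by
      have hFD := ht0d.hasFDerivAt
      rw [hasFDerivAt_iff_isLittleO_nhds_zero] at hFD
      have hev := hFD.def (show (0:ℝ) < c / 2 by positivity)
      rw [Metric.eventually_nhds_iff] at hev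
      obtain ⟨s₀, hs₀pos, hs₀⟩ := hev
      refine ⟨s₀ / 2, by positivity, ?_⟩
      intro h hh
      have hb1 : ‖H (t0 + h) - H t0 - (fderiv ℝ H t0) h‖ ≤ c / 2 * ‖h‖ := by
        apply hs₀
        rw [dist_zero_right]
        linarith
      have hb2 : ‖H (t0 + -h) - H t0 - (fderiv ℝ H t0) (-h)‖ ≤ c / 2 * ‖-h‖ := by
        apply hs₀
        rw [dist_zero_right, norm_neg]
        linarith
      rw [norm_neg] at hb2
      rw [map_neg] at hb2
      have e1 : H (t0 + h) - H t0 - (fderiv ℝ H t0) h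
          ≤ c / 2 * ‖h‖ := (le_abs_self _).trans (by rwa [Real.norm_eq_abs] at hb1)
      have habs2 : |H (t0 + -h) - H t0 - -((fderiv ℝ H t0) h)| ≤ c / 2 * ‖h‖ := by
        rwa [Real.norm_eq_abs] at hb2
      have e2 : H (t0 + -h) - H t0 + (fderiv ℝ H t0) h ≤ c / 2 * ‖h‖ := by
        have h5 := (le_abs_self (H (t0 + -h) - H t0 - -((fderiv ℝ H t0) h))).trans habs2
        linarith
      have hhs : ‖h‖ ≤ s₀ / 2 := hh
      have hcnn : 0 ≤ c / 2 := by positivity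
      have e3 : c / 2 * ‖h‖ ≤ c / 2 * (s₀ / 2) := by
        apply mul_le_mul_of_nonneg_left hhs hcnn
      have e4 : t0 + -h = t0 - h := by abel
      rw [e4] at e2
      linarith
    -- the slice parameter
    set δ : ℝ := min (α / 4) (s * c) with hδdef
    have hδpos : 0 < δ := lt_min (by linarith) (by positivity)
    have hδa : δ ≤ α / 4 := min_le_left _ _
    have hδsc : δ ≤ s * c := min_le_right _ _
    -- the slice of the dual ball given by v
    have hTdiam := hX v hv0 δ hδpos
    rw [sSup_dual_ball18 v hv0] at hTdiam
    set T : Set (StrongDual ℝ X) := {f ∈ closedBall (0 : StrongDual ℝ X) 1 | ‖v‖ - δ < f v} with hTdef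
    obtain ⟨f, hfT, g, hgT, hfg⟩ : ∃ f ∈ T, ∃ g ∈ T, 2 - ε₁ / 4 < dist f g := by
      by_contra hcon
      push_neg at hcon
      have h1 : Metric.diam T ≤ 2 - ε₁ / 4 :=
        Metric.diam_le_of_forall_dist_le (by linarith) hcon
      rw [hTdiam] at h1
      linarith
    have hfB : ‖f‖ ≤ 1 := by
      have := hfT.1
      rwa [mem_closedBall_zero_iff] at this
    have hgB : ‖g‖ ≤ 1 := by
      have := hgT.1
      rwa [mem_closedBall_zero_iff] at this
    have hfv : ‖v‖ - δ < f v := hfT.2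
    have hgv : ‖v‖ - δ < g v := hgT.2
    -- coordinate estimates on the slice
    have hcoord : ∀ (f' g' : StrongDual ℝ X), ‖f'‖ ≤ 1 → ‖v‖ - δ < f' v → ‖g'‖ ≤ 1 →
        ‖v‖ - δ < g' v → ∀ j, f' (yv j) - g' (yv j) < 3 * c := by
      intro f' g' hf'B hf'v hg'B hg'v j
      set hj : Fin n → ℝ := s • (Pi.single j 1 : Fin n → ℝ) with hhjdef
      have hhjnorm : ‖hj‖ = s := by
        rw [hhjdef, norm_smul, Pi.norm_single, norm_one, Real.norm_eq_abs,
          abs_of_pos hspos, mul_one]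
      have hsumhj : ∑ i, hj i • yv i = s • yv j := by
        have hterm : ∀ i, hj i • yv i = if i = j then s • yv j else 0 := by
          intro i
          by_cases hij : i = j
          · subst hij
            simp [hhjdef, Pi.single_eq_same, smul_smul]
          · simp [hhjdef, Pi.single_eq_of_ne hij, hij]
        rw [Finset.sum_congr rfl fun i _ => hterm i, Finset.sum_ite_eq' Finset.univ j]
        simp
      have hplus : x' + ∑ i, (t0 + hj) i • yv i = v + s • yv j := by
        have h5 : ∑ i, (t0 + hj) i • yv i = ∑ i, t0 i • yv i + ∑ i, hj i • yv i := by
          rw [← Finset.sum_add_distrib]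
          refine Finset.sum_congr rfl fun i _ => ?_
          rw [Pi.add_apply, add_smul]
        rw [h5, hsumhj, hvdef]
        abel
      have hminus : x' + ∑ i, (t0 - hj) i • yv i = v - s • yv j := by
        have h5 : ∑ i, (t0 - hj) i • yv i = ∑ i, t0 i • yv i - ∑ i, hj i • yv i := by
          rw [← Finset.sum_sub_distrib]
          refine Finset.sum_congr rfl fun i _ => ?_
          rw [Pi.sub_apply, sub_smul]
        rw [h5, hsumhj, hvdef]
        abel
      have hΔj := hΔ hj (le_of_eq hhjnorm)
      have hHp : H (t0 + hj) = ‖v + s • yv j‖ := by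
        rw [show H (t0 + hj) = ‖x' + ∑ i, (t0 + hj) i • yv i‖ from rfl, hplus]
      have hHm : H (t0 - hj) = ‖v - s • yv j‖ := by
        rw [show H (t0 - hj) = ‖x' + ∑ i, (t0 - hj) i • yv i‖ from rfl, hminus]
      have hfp : f' (v + s • yv j) ≤ H (t0 + hj) := by
        rw [hHp]
        calc f' (v + s • yv j) ≤ |f' (v + s • yv j)| := le_abs_self _
          _ ≤ ‖f'‖ * ‖v + s • yv j‖ := f'.le_opNorm _
          _ ≤ 1 * ‖v + s • yv j‖ := mul_le_mul_of_nonneg_right hf'B (norm_nonneg _)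
          _ = ‖v + s • yv j‖ := one_mul _
      have hgm : g' (v - s • yv j) ≤ H (t0 - hj) := by
        rw [hHm]
        calc g' (v - s • yv j) ≤ |g' (v - s • yv j)| := le_abs_self _
          _ ≤ ‖g'‖ * ‖v - s • yv j‖ := g'.le_opNorm _
          _ ≤ 1 * ‖v - s • yv j‖ := mul_le_mul_of_nonneg_right hg'B (norm_nonneg _)
          _ = ‖v - s • yv j‖ := one_mul _
      have hf'exp : f' (v + s • yv j) = f' v + s * f' (yv j) := by
        rw [map_add, map_smul]
        rfl
      have hg'exp : g' (v - s • yv j) = g' v - s * g' (yv j) := by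
        rw [map_sub, map_smul]
        rfl
      have k1 : s * f' (yv j) < H (t0 + hj) - ‖v‖ + δ := by
        rw [hf'exp] at hfp
        linarith
      have k2 : -(s * g' (yv j)) < H (t0 - hj) - ‖v‖ + δ := by
        rw [hg'exp] at hgm
        linarith
      have k3 : s * (f' (yv j) - g' (yv j)) < s * (3 * c) := by
        have h6 : H (t0 + hj) + H (t0 - hj) - 2 * ‖v‖ ≤ c * s := by
          rw [← hHt0]
          exact hΔj
        have h7 : s * (f' (yv j) - g' (yv j)) < c * s + 2 * δ := by
          rw [mul_sub]
          linarith
        have h8 : (2 : ℝ) * δ ≤ 2 * (s * c) := by linarith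
        have h9 : c * s + 2 * (s * c) = s * (3 * c) := by ring
        linarith
      exact (mul_lt_mul_iff_right₀ hspos).mp k3
    have habs : ∀ j, |f (yv j) - g (yv j)| ≤ 3 * c := by
      intro j
      have h1 := hcoord f g hfB hfv hgB hgv j
      have h2 := hcoord g f hgB hgv hfB hfv j
      rw [abs_le]
      constructor <;> linarith
    -- norm bound on the kernel component of f - g
    set QD : StrongDual ℝ X := (f - g) - P (f - g) with hQDdef
    have hQDnorm : ‖QD‖ ≤ ε₁ / 4 := by
      have h3cCK : 3 * c * CK ≤ ε₁ / 4 := by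
        have hck : c * (CK + 1) = ε₁ / 16 := by
          rw [hcdef]
          field_simp
        have h30 : 3 * (c * (CK + 1)) = 3 * (ε₁ / 16) := by rw [hck]
        have h31 : 3 * (c * (CK + 1)) = 3 * c * CK + 3 * c := by ring
        linarith [hcpos.le, hε₁pos.le]
      calc ‖QD‖ = ‖∑ i, (f - g) (yv i) • kv i‖ := by rw [hQDdef, hQ (f - g)]
        _ ≤ ∑ i, ‖(f - g) (yv i) • kv i‖ := norm_sum_le _ _
        _ = ∑ i, |(f - g) (yv i)| * ‖kv i‖ := by
            refine Finset.sum_congr rfl fun i _ => ?_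
            rw [norm_smul, Real.norm_eq_abs]
        _ ≤ ∑ i, (3 * c) * ‖kv i‖ := by
            refine Finset.sum_le_sum fun i _ => ?_
            apply mul_le_mul_of_nonneg_right _ (norm_nonneg _)
            rw [ContinuousLinearMap.sub_apply]
            exact habs i
        _ = 3 * c * CK := by rw [← Finset.mul_sum]
        _ ≤ ε₁ / 4 := h3cCK
    -- a norming direction for f - g
    obtain ⟨σ, hσ1, hσval⟩ : ∃ σ : X, ‖σ‖ ≤ 1 ∧ 2 - ε₁ / 4 < (f - g) σ := by
      have hnormfg : 2 - ε₁ / 4 < ‖f - g‖ := by rwa [← dist_eq_norm]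
      have hex : ∃ z : X, (2 - ε₁ / 4) * ‖z‖ < ‖(f - g) z‖ := by
        by_contra hcon
        push_neg at hcon
        have := (f - g).opNorm_le_bound (by linarith) hcon
        linarith
      obtain ⟨z, hz⟩ := hex
      have hz0 : z ≠ 0 := by
        intro h
        rw [h] at hz
        simp at hz
      have hzpos : 0 < ‖z‖ := norm_pos_iff.mpr hz0
      set u : X := ‖z‖⁻¹ • z with hudef
      have hun : ‖u‖ = 1 := by
        rw [hudef, norm_smul, norm_inv, norm_norm, inv_mul_cancel₀ (ne_of_gt hzpos)]
      have huval : 2 - ε₁ / 4 < |(f - g) u| := by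
        have h5 : (f - g) u = ‖z‖⁻¹ * (f - g) z := by
          rw [hudef, map_smul]
          rfl
        rw [h5, abs_mul, abs_inv, abs_norm]
        rw [show (2 : ℝ) - ε₁ / 4 = ‖z‖⁻¹ * ((2 - ε₁ / 4) * ‖z‖) by field_simp]
        apply mul_lt_mul_of_pos_left _ (inv_pos.mpr hzpos)
        rwa [Real.norm_eq_abs] at hz
      by_cases hsign : 0 ≤ (f - g) u
      · exact ⟨u, le_of_eq hun, by rwa [abs_of_nonneg hsign] at huval⟩
      · refine ⟨-u, by rw [norm_neg]; exact le_of_eq hun, ?_⟩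
        rw [map_neg]
        rwa [abs_of_neg (lt_of_not_ge hsign)] at huval
    -- the two elements of the slice of W
    have hmemS : ∀ (f' : StrongDual ℝ X), ‖f'‖ ≤ 1 → ‖v‖ - δ < f' v →
        (⟨P f', hPmem f'⟩ : ↥W) ∈ SW := by
      intro f' hf'B hf'v
      rw [hSW]
      simp only [Set.mem_setOf_eq]
      constructor
      · rw [mem_closedBall_zero_iff (E := ↥W)]
        show ‖P f'‖ ≤ 1
        exact (hPnorm f').trans hf'B
      · show sW - α < P f' x
        rw [hsWval, hx' f']
        have hsplit : f' x' = f' v - f' (∑ i, t0 i • yv i) := by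
          rw [hvdef, map_add]
          ring
        have hbound : f' (∑ i, t0 i • yv i) ≤ ρ := by
          calc f' (∑ i, t0 i • yv i) ≤ |f' (∑ i, t0 i • yv i)| := le_abs_self _
            _ ≤ ‖f'‖ * ρ := by rw [hρdef]; exact f'.le_opNorm _
            _ ≤ 1 * ρ := by
                apply mul_le_mul_of_nonneg_right hf'B
                rw [hρdef]
                exact norm_nonneg _
            _ = ρ := one_mul _
        have h9 : ‖v‖ - δ - ρ ≤ f' x' := by
          rw [hsplit]
          linarith
        linarith
    have hm₁ := hmemS f hfB hfv
    have hm₂ := hmemS g hgB hgv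
    -- the distance between the projections is large
    have hPfg : P f - P g = (f - g) - QD := by
      rw [hQDdef, sub_sub_cancel, map_sub]
    have hval : 2 - ε₁ / 2 ≤ (P f - P g) σ := by
      rw [hPfg, ContinuousLinearMap.sub_apply]
      have hQDσ : QD σ ≤ ε₁ / 4 := by
        calc QD σ ≤ |QD σ| := le_abs_self _
          _ ≤ ‖QD‖ * ‖σ‖ := QD.le_opNorm σ
          _ ≤ ε₁ / 4 * 1 := by
              apply mul_le_mul hQDnorm hσ1 (norm_nonneg _) (by linarith)
          _ = ε₁ / 4 := mul_one _
      linarith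
    have hdistfin : 2 - ε₁ / 2 ≤ dist (⟨P f, hPmem f⟩ : ↥W) (⟨P g, hPmem g⟩ : ↥W) := by
      have h1 : (P f - P g) σ ≤ ‖P f - P g‖ := by
        calc (P f - P g) σ ≤ |(P f - P g) σ| := le_abs_self _
          _ ≤ ‖P f - P g‖ * ‖σ‖ := (P f - P g).le_opNorm σ
          _ ≤ ‖P f - P g‖ * 1 := mul_le_mul_of_nonneg_left hσ1 (norm_nonneg _)
          _ = ‖P f - P g‖ := mul_one _
      have h2 : dist (⟨P f, hPmem f⟩ : ↥W) (⟨P g, hPmem g⟩ : ↥W) = ‖P f - P g‖ := by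
        rw [dist_eq_norm (E := ↥W)]
        rfl
      linarith
    have hdd := Metric.dist_le_diam_of_mem
      (Metric.isBounded_closedBall.subset hSWsub) hm₁ hm₂
    linarith
end
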